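/- arXiv:math/9604220 — 3 statements merged into one kernel-verified Lean document; each statement's English description precedes it below -/
import Mathlib

section
/- If (A, **A**) is a p-Banach operator ideal (0 < p ≤ 1) and (B, **B**) a q-Banach operator ideal, then the right-B-quotient A ∘ B⁻¹, defined by T ∈ (A ∘ B⁻¹)(E,F) iff TS ∈ A(G,F) for all Banach spaces G and all S ∈ B(G,E), with norm (**A**∘**B**⁻¹)(T) = sup{**A**(TS) : **B**(S) = 1}, is a p-Banach operator ideal. -/
noncomputable section

open scoped Classical

universe u

/-- A bundled Banach space over `ℝ`. -/
structure BanachSpc : Type (u + 1) where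
  carrier : Type u
  [grp : NormedAddCommGroup carrier]
  [mod : NormedSpace ℝ carrier]
  [cpl : CompleteSpace carrier]

attribute [instance] BanachSpc.grp BanachSpc.mod BanachSpc.cpl

instance : CoeSort BanachSpc.{u} (Type u) := ⟨BanachSpc.carrier⟩

/-- The data of an operator ideal: a class of operators together with an ideal "norm". -/
structure OperatorIdeal : Type (u + 1) where
  mem : ∀ (E F : BanachSpc.{u}), (E.carrier →L[ℝ] F.carrier) → Prop
  nrm : ∀ (E F : BanachSpc.{u}), (E.carrier →L[ℝ] F.carrier) → ℝ

/-- A finite rank (finite) operator. -/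
def FinRankOp {E F : BanachSpc.{u}} (T : E.carrier →L[ℝ] F.carrier) : Prop :=
  FiniteDimensional ℝ (LinearMap.range (T : E.carrier →ₗ[ℝ] F.carrier))

/-- The trace of a (finite rank) operator, computed as the trace of the induced
endomorphism of its range. -/
noncomputable def fTrace {E : BanachSpc.{u}} (T : E.carrier →L[ℝ] E.carrier) : ℝ :=
  LinearMap.trace ℝ (LinearMap.range (T : E.carrier →ₗ[ℝ] E.carrier))
    ((T : E.carrier →ₗ[ℝ] E.carrier).restrict
      (p := LinearMap.range (T : E.carrier →ₗ[ℝ] E.carrier))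
      (q := LinearMap.range (T : E.carrier →ₗ[ℝ] E.carrier))
      (fun x _ => LinearMap.mem_range_self _ x))

/-- `IsPBanachIdeal p A` : `A` is a `p`-Banach operator ideal (`0 < p ≤ 1`). -/
structure IsPBanachIdeal (p : ℝ) (A : OperatorIdeal.{u}) : Prop where
  p_pos : 0 < p
  p_le_one : p ≤ 1
  finrank_mem : ∀ (E F : BanachSpc.{u}) (T : E.carrier →L[ℝ] F.carrier), FinRankOp T → A.mem E F T
  nonneg : ∀ (E F : BanachSpc.{u}) (T : E.carrier →L[ℝ] F.carrier), 0 ≤ A.nrm E F T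
  opnorm_le : ∀ (E F : BanachSpc.{u}) (T : E.carrier →L[ℝ] F.carrier), A.mem E F T → ‖T‖ ≤ A.nrm E F T
  rank_one_le : ∀ (E F : BanachSpc.{u}) (a : E.carrier →L[ℝ] ℝ) (y : F.carrier),
    A.nrm E F (a.smulRight y) ≤ ‖a‖ * ‖y‖
  smul_mem : ∀ (E F : BanachSpc.{u}) (c : ℝ) (T : E.carrier →L[ℝ] F.carrier),
    A.mem E F T → A.mem E F (c • T)
  nrm_smul : ∀ (E F : BanachSpc.{u}) (c : ℝ) (T : E.carrier →L[ℝ] F.carrier),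
    A.mem E F T → A.nrm E F (c • T) = |c| * A.nrm E F T
  add_mem : ∀ (E F : BanachSpc.{u}) (S T : E.carrier →L[ℝ] F.carrier),
    A.mem E F S → A.mem E F T → A.mem E F (S + T)
  p_triangle : ∀ (E F : BanachSpc.{u}) (S T : E.carrier →L[ℝ] F.carrier),
    A.mem E F S → A.mem E F T →
    A.nrm E F (S + T) ^ p ≤ A.nrm E F S ^ p + A.nrm E F T ^ p
  comp_mem : ∀ (E F G H : BanachSpc.{u}) (R : E.carrier →L[ℝ] F.carrier)
    (T : F.carrier →L[ℝ] G.carrier) (S : G.carrier →L[ℝ] H.carrier),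
    A.mem F G T → A.mem E H (S.comp (T.comp R))
  comp_le : ∀ (E F G H : BanachSpc.{u}) (R : E.carrier →L[ℝ] F.carrier)
    (T : F.carrier →L[ℝ] G.carrier) (S : G.carrier →L[ℝ] H.carrier),
    A.mem F G T → A.nrm E H (S.comp (T.comp R)) ≤ ‖S‖ * A.nrm F G T * ‖R‖
  complete : ∀ (E F : BanachSpc.{u}) (f : ℕ → (E.carrier →L[ℝ] F.carrier)),
    (∀ n, A.mem E F (f n)) →
    (∀ ε > (0 : ℝ), ∃ N : ℕ, ∀ m ≥ N, ∀ n ≥ N, A.nrm E F (f m - f n) ^ p < ε) →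
    ∃ T, A.mem E F T ∧ ∀ ε > (0 : ℝ), ∃ N : ℕ, ∀ n ≥ N, A.nrm E F (f n - T) ^ p < ε

namespace OperatorIdeal

/-- The product ideal `A ∘ B`. -/
def prod (A B : OperatorIdeal.{u}) : OperatorIdeal.{u} where
  mem E F T := ∃ (G : BanachSpc.{u}) (R : E.carrier →L[ℝ] G.carrier)
    (S : G.carrier →L[ℝ] F.carrier), B.mem E G R ∧ A.mem G F S ∧ T = S.comp R
  nrm E F T := sInf { r : ℝ | ∃ (G : BanachSpc.{u}) (R : E.carrier →L[ℝ] G.carrier)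
    (S : G.carrier →L[ℝ] F.carrier), B.mem E G R ∧ A.mem G F S ∧ T = S.comp R ∧
    r = A.nrm G F S * B.nrm E G R }

/-- The right-`B`-quotient `A ∘ B⁻¹`. -/
def rightQuotient (A B : OperatorIdeal.{u}) : OperatorIdeal.{u} where
  mem E F T := ∀ (G : BanachSpc.{u}) (S : G.carrier →L[ℝ] E.carrier),
    B.mem G E S → A.mem G F (T.comp S)
  nrm E F T := sSup { r : ℝ | ∃ (G : BanachSpc.{u}) (S : G.carrier →L[ℝ] E.carrier),
    B.mem G E S ∧ B.nrm G E S = 1 ∧ r = A.nrm G F (T.comp S) }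

/-- The conjugate ideal `A^Δ`, defined by trace duality against finite rank operators. -/
def conj (A : OperatorIdeal.{u}) : OperatorIdeal.{u} where
  mem E F T := ∃ c : ℝ, 0 ≤ c ∧ ∀ L : F.carrier →L[ℝ] E.carrier, FinRankOp L →
    |fTrace (T.comp L)| ≤ c * A.nrm F E L
  nrm E F T := sInf { c : ℝ | 0 ≤ c ∧ ∀ L : F.carrier →L[ℝ] E.carrier, FinRankOp L →
    |fTrace (T.comp L)| ≤ c * A.nrm F E L }

/-- The adjoint ideal `A*`. -/
def adj (A : OperatorIdeal.{u}) : OperatorIdeal.{u} where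
  mem E F T := ∃ c : ℝ, 0 ≤ c ∧ ∀ (E₀ F₀ : BanachSpc.{u})
    (B : E₀.carrier →L[ℝ] E.carrier) (S : F₀.carrier →L[ℝ] E₀.carrier)
    (A₀ : F.carrier →L[ℝ] F₀.carrier), FinRankOp B → FinRankOp A₀ → A.mem F₀ E₀ S →
    |fTrace (T.comp (B.comp (S.comp A₀)))| ≤ c * ‖B‖ * A.nrm F₀ E₀ S * ‖A₀‖
  nrm E F T := sInf { c : ℝ | 0 ≤ c ∧ ∀ (E₀ F₀ : BanachSpc.{u})
    (B : E₀.carrier →L[ℝ] E.carrier) (S : F₀.carrier →L[ℝ] E₀.carrier)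
    (A₀ : F.carrier →L[ℝ] F₀.carrier), FinRankOp B → FinRankOp A₀ → A.mem F₀ E₀ S →
    |fTrace (T.comp (B.comp (S.comp A₀)))| ≤ c * ‖B‖ * A.nrm F₀ E₀ S * ‖A₀‖ }

/-- The ideal of approximable operators, with the operator norm. -/
def approx : OperatorIdeal.{u} where
  mem E F T := ∀ ε > (0 : ℝ), ∃ L : E.carrier →L[ℝ] F.carrier, FinRankOp L ∧ ‖T - L‖ < ε
  nrm E F T := ‖T‖

/-- The minimal kernel `A^min = F̄ ∘ A ∘ F̄`. -/
def minKer (A : OperatorIdeal.{u}) : OperatorIdeal.{u} :=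
  OperatorIdeal.prod approx (OperatorIdeal.prod A approx)

/-- The injective hull `A^inj` : `T ∈ A^inj` iff `J ∘ T ∈ A` for some metric injection `J`,
with the induced infimum norm. -/
def injHull (A : OperatorIdeal.{u}) : OperatorIdeal.{u} where
  mem E F T := ∃ (G : BanachSpc.{u}) (J : F.carrier →L[ℝ] G.carrier),
    Isometry J ∧ A.mem E G (J.comp T)
  nrm E F T := sInf { r : ℝ | ∃ (G : BanachSpc.{u}) (J : F.carrier →L[ℝ] G.carrier),
    Isometry J ∧ A.mem E G (J.comp T) ∧ r = A.nrm E G (J.comp T) }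

end OperatorIdeal

/-- A finite dimensional subspace of a Banach space, as a Banach space. -/
def SubBanach (F : BanachSpc.{u}) (N : Submodule ℝ F.carrier)
    (hN : FiniteDimensional ℝ ↥N) : BanachSpc.{u} :=
  letI := hN; ⟨↥N⟩

/-- A quotient of a Banach space by a closed subspace, as a Banach space. -/
def QuotBanach (E : BanachSpc.{u}) (K : Submodule ℝ E.carrier)
    (hK : IsClosed (K : Set E.carrier)) : BanachSpc.{u} :=
  letI := hK; ⟨E.carrier ⧸ K⟩

/-- The dual of a Banach space, as a Banach space. -/
def DualB (F : BanachSpc.{u}) : BanachSpc.{u} := ⟨StrongDual ℝ F.carrier⟩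

/-- The bidual of a Banach space, as a Banach space. -/
def BidualB (F : BanachSpc.{u}) : BanachSpc.{u} := DualB (DualB F)

/-- Left accessibility of an operator ideal. -/
def LeftAccessible (A : OperatorIdeal.{u}) : Prop :=
  ∀ (E N : BanachSpc.{u}), FiniteDimensional ℝ N.carrier →
  ∀ (T : E.carrier →L[ℝ] N.carrier), ∀ ε > (0 : ℝ),
  ∃ (K : Submodule ℝ E.carrier) (hK : IsClosed (K : Set E.carrier))
    (_ : FiniteDimensional ℝ (E.carrier ⧸ K))
    (S : (QuotBanach E K hK).carrier →L[ℝ] N.carrier),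
    (∀ x : E.carrier, T x = S (Submodule.Quotient.mk x)) ∧
    A.nrm (QuotBanach E K hK) N S ≤ (1 + ε) * A.nrm E N T

/-- Right accessibility of an operator ideal. -/
def RightAccessible (A : OperatorIdeal.{u}) : Prop :=
  ∀ (M F : BanachSpc.{u}), FiniteDimensional ℝ M.carrier →
  ∀ (T : M.carrier →L[ℝ] F.carrier), ∀ ε > (0 : ℝ),
  ∃ (N : Submodule ℝ F.carrier) (hN : FiniteDimensional ℝ ↥N)
    (S : M.carrier →L[ℝ] (SubBanach F N hN).carrier),
    (∀ x : M.carrier, T x = N.subtype (S x)) ∧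
    A.nrm M (SubBanach F N hN) S ≤ (1 + ε) * A.nrm M F T

/-- Total accessibility of an operator ideal. -/
def TotallyAccessible (A : OperatorIdeal.{u}) : Prop :=
  ∀ (E F : BanachSpc.{u}) (T : E.carrier →L[ℝ] F.carrier), FinRankOp T → ∀ ε > (0 : ℝ),
  ∃ (K : Submodule ℝ E.carrier) (hK : IsClosed (K : Set E.carrier))
    (_ : FiniteDimensional ℝ (E.carrier ⧸ K))
    (N : Submodule ℝ F.carrier) (hN : FiniteDimensional ℝ ↥N)
    (S : (QuotBanach E K hK).carrier →L[ℝ] (SubBanach F N hN).carrier),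
    (∀ x : E.carrier, T x = N.subtype (S (Submodule.Quotient.mk x))) ∧
    A.nrm (QuotBanach E K hK) (SubBanach F N hN) S ≤ (1 + ε) * A.nrm E F T

/-- The `A`-extension property. -/
def ExtensionProperty (A : OperatorIdeal.{u}) : Prop :=
  ∀ ε > (0 : ℝ), ∀ (E G F : BanachSpc.{u}) (J : E.carrier →L[ℝ] G.carrier), Isometry J →
  ∀ (T : E.carrier →L[ℝ] F.carrier), A.mem E F T →
  ∃ Tt : G.carrier →L[ℝ] F.carrier, A.mem G F Tt ∧ (∀ x : E.carrier, T x = Tt (J x)) ∧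
    A.nrm G F Tt ≤ (1 + ε) * A.nrm E F T

/-- The principle of `A`-local reflexivity (`A`-LRP). -/
def LRPholds (A : OperatorIdeal.{u}) : Prop :=
  ∀ (M F : BanachSpc.{u}), FiniteDimensional ℝ M.carrier →
  ∀ (N : Submodule ℝ (StrongDual ℝ F.carrier)), FiniteDimensional ℝ ↥N →
  ∀ (T : M.carrier →L[ℝ] StrongDual ℝ (StrongDual ℝ F.carrier)), ∀ ε > (0 : ℝ),
  ∃ S : M.carrier →L[ℝ] F.carrier,
    A.nrm M F S ≤ (1 + ε) * (A.adj.adj).nrm M (BidualB F) T ∧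
    (∀ (x : M.carrier) (b : ↥N), (b : StrongDual ℝ F.carrier) (S x) = T x b) ∧
    (∀ x : M.carrier, T x ∈ Set.range (NormedSpace.inclusionInDoubleDual ℝ F.carrier) →
      NormedSpace.inclusionInDoubleDual ℝ F.carrier (S x) = T x)

/-- `A` is a maximal Banach ideal: `A = A** = (A*)*` isometrically. -/
def IsMaximalIdeal (A : OperatorIdeal.{u}) : Prop :=
  ∀ (E F : BanachSpc.{u}) (T : E.carrier →L[ℝ] F.carrier),
    (A.mem E F T ↔ (A.adj.adj).mem E F T) ∧ A.nrm E F T = (A.adj.adj).nrm E F T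

section RightQuotientProof

open Filter ContinuousLinearMap

variable {p q : ℝ} {A B : OperatorIdeal.{u}}

lemma finRankOp_zero {E F : BanachSpc.{u}} : FinRankOp (0 : E.carrier →L[ℝ] F.carrier) := by
  have h : ((0 : E.carrier →L[ℝ] F.carrier) : E.carrier →ₗ[ℝ] F.carrier) = 0 := rfl
  unfold FinRankOp
  rw [h, LinearMap.range_zero]
  infer_instance

namespace IsPBanachIdeal

lemma mem_zero (hA : IsPBanachIdeal p A) (E F : BanachSpc.{u}) :
    A.mem E F 0 :=
  hA.finrank_mem E F 0 finRankOp_zero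

lemma nrm_zero (hA : IsPBanachIdeal p A) (E F : BanachSpc.{u}) :
    A.nrm E F 0 = 0 := by
  have h := hA.nrm_smul E F 0 0 (hA.mem_zero E F)
  simpa using h

lemma neg_mem (hA : IsPBanachIdeal p A) {E F : BanachSpc.{u}}
    {T : E.carrier →L[ℝ] F.carrier} (h : A.mem E F T) : A.mem E F (-T) := by
  have := hA.smul_mem E F (-1) T h
  simpa using this

lemma nrm_neg (hA : IsPBanachIdeal p A) {E F : BanachSpc.{u}}
    {T : E.carrier →L[ℝ] F.carrier} (h : A.mem E F T) :
    A.nrm E F (-T) = A.nrm E F T := by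
  have := hA.nrm_smul E F (-1) T h
  simpa using this

lemma sub_mem (hA : IsPBanachIdeal p A) {E F : BanachSpc.{u}}
    {S T : E.carrier →L[ℝ] F.carrier} (hS : A.mem E F S) (hT : A.mem E F T) :
    A.mem E F (S - T) := by
  rw [sub_eq_add_neg]
  exact hA.add_mem E F S (-T) hS (hA.neg_mem hT)

/-- Convergence in the `A`-norm (in the `p`-power sense) implies operator norm convergence. -/
lemma tendsto_of_nrm (hA : IsPBanachIdeal p A) {E F : BanachSpc.{u}}
    {f : ℕ → (E.carrier →L[ℝ] F.carrier)} {T : E.carrier →L[ℝ] F.carrier}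
    (hm : ∀ n, A.mem E F (f n - T))
    (h : ∀ ε > (0 : ℝ), ∃ N : ℕ, ∀ n ≥ N, A.nrm E F (f n - T) ^ p < ε) :
    Tendsto f atTop (nhds T) := by
  rw [Metric.tendsto_atTop]
  intro ε hε
  obtain ⟨N, hN⟩ := h (ε ^ p) (Real.rpow_pos_of_pos hε p)
  refine ⟨N, fun n hn => ?_⟩
  have h1 := hN n hn
  have h2 : ‖f n - T‖ ≤ A.nrm E F (f n - T) := hA.opnorm_le _ _ _ (hm n)
  have h3 : A.nrm E F (f n - T) < ε := by
    by_contra hc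
    push_neg at hc
    exact absurd (Real.rpow_le_rpow hε.le hc hA.p_pos.le) (not_le.2 h1)
  rw [dist_eq_norm]
  exact lt_of_le_of_lt h2 h3

lemma sum_mem (hA : IsPBanachIdeal p A) {E F : BanachSpc.{u}}
    (s : Finset ℕ) (f : ℕ → (E.carrier →L[ℝ] F.carrier))
    (h : ∀ k, A.mem E F (f k)) : A.mem E F (∑ k ∈ s, f k) := by
  classical
  induction s using Finset.induction_on with
  | empty => simpa using hA.mem_zero E F
  | insert a s ha ih =>
    rw [Finset.sum_insert ha]
    exact hA.add_mem E F _ _ (h _) ih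

lemma nrm_sum_le (hA : IsPBanachIdeal p A) {E F : BanachSpc.{u}}
    (s : Finset ℕ) (f : ℕ → (E.carrier →L[ℝ] F.carrier))
    (h : ∀ k, A.mem E F (f k)) :
    A.nrm E F (∑ k ∈ s, f k) ^ p ≤ ∑ k ∈ s, A.nrm E F (f k) ^ p := by
  classical
  induction s using Finset.induction_on with
  | empty =>
    simp [hA.nrm_zero E F, Real.zero_rpow hA.p_pos.ne']
  | @insert a s ha ih =>
    rw [Finset.sum_insert ha, Finset.sum_insert ha]
    calc A.nrm E F (f a + ∑ k ∈ s, f k) ^ p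
        ≤ A.nrm E F (f a) ^ p + A.nrm E F (∑ k ∈ s, f k) ^ p :=
          hA.p_triangle E F _ _ (h a) (hA.sum_mem s f h)
      _ ≤ A.nrm E F (f a) ^ p + ∑ k ∈ s, A.nrm E F (f k) ^ p := by linarith

end IsPBanachIdeal

lemma sSup_mul_of_nonneg {k : ℝ} (hk : 0 < k) {s : Set ℝ} (hs : ∀ x ∈ s, 0 ≤ x) :
    sSup ((fun r => k * r) '' s) = k * sSup s := by
  rcases s.eq_empty_or_nonempty with rfl | hne
  · simp [Real.sSup_empty]
  have hs' : ∀ x ∈ (fun r => k * r) '' s, 0 ≤ x := by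
    rintro x ⟨r, hr, rfl⟩
    exact mul_nonneg hk.le (hs r hr)
  by_cases hbdd : BddAbove s
  · have hbdd' : BddAbove ((fun r => k * r) '' s) := by
      obtain ⟨M, hM⟩ := hbdd
      refine ⟨k * M, ?_⟩
      rintro x ⟨r, hr, rfl⟩
      exact mul_le_mul_of_nonneg_left (hM hr) hk.le
    refine le_antisymm ?_ ?_
    · refine Real.sSup_le ?_ (mul_nonneg hk.le (Real.sSup_nonneg hs))
      rintro x ⟨r, hr, rfl⟩
      exact mul_le_mul_of_nonneg_left (le_csSup hbdd hr) hk.le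
    · rw [mul_comm, ← le_div_iff₀ hk]
      refine Real.sSup_le (fun x hx => ?_) (div_nonneg (Real.sSup_nonneg hs') hk.le)
      rw [le_div_iff₀ hk, mul_comm]
      exact le_csSup hbdd' ⟨x, hx, rfl⟩
  · have hbdd' : ¬ BddAbove ((fun r => k * r) '' s) := by
      rintro ⟨M, hM⟩
      refine hbdd ⟨M / k, fun r hr => ?_⟩
      rw [le_div_iff₀ hk, mul_comm]
      exact hM ⟨r, hr, rfl⟩
    rw [Real.sSup_of_not_bddAbove hbdd, Real.sSup_of_not_bddAbove hbdd', mul_zero]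

end RightQuotientProof

section RightQuotientProof2

open Filter ContinuousLinearMap
open scoped ENNReal

variable {p q : ℝ} {A B : OperatorIdeal.{u}}

/-- The defining set for the norm of the right quotient. -/
def QSet (A B : OperatorIdeal.{u}) (E F : BanachSpc.{u}) (T : E.carrier →L[ℝ] F.carrier) :
    Set ℝ :=
  { r : ℝ | ∃ (G : BanachSpc.{u}) (S : G.carrier →L[ℝ] E.carrier),
      B.mem G E S ∧ B.nrm G E S = 1 ∧ r = A.nrm G F (T.comp S) }

lemma quot_nrm_eq (E F : BanachSpc.{u}) (T : E.carrier →L[ℝ] F.carrier) :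
    (A.rightQuotient B).nrm E F T = sSup (QSet A B E F T) := rfl

lemma qset_nonneg (hA : IsPBanachIdeal p A) (E F : BanachSpc.{u})
    (T : E.carrier →L[ℝ] F.carrier) : ∀ r ∈ QSet A B E F T, 0 ≤ r := by
  rintro r ⟨G, S, _, _, rfl⟩
  exact hA.nonneg G F _

/-- KEY LEMMA: for `T` in the right quotient, the norm-defining set is bounded above. -/
lemma quot_bddAbove (hA : IsPBanachIdeal p A) (hB : IsPBanachIdeal q B)
    {E F : BanachSpc.{u}} {T : E.carrier →L[ℝ] F.carrier}
    (hT : (A.rightQuotient B).mem E F T) :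
    BddAbove (QSet A B E F T) := by
  classical
  by_contra hbdd
  rw [not_bddAbove_iff] at hbdd
  have hq0 : q ≠ 0 := hB.p_pos.ne'
  -- coefficients
  set c : ℕ → ℝ := fun n => ((1 / 2 : ℝ) ^ n) ^ (q⁻¹) with hc
  have hc_pos : ∀ n, 0 < c n := fun n => Real.rpow_pos_of_pos (by positivity) _
  have hcq : ∀ n, (c n) ^ q = (1 / 2 : ℝ) ^ n := fun n =>
    Real.rpow_inv_rpow (by positivity) hq0
  -- select a bad sequence
  have hsel : ∀ n : ℕ, ∃ (G : BanachSpc.{u}) (S : G.carrier →L[ℝ] E.carrier),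
      B.mem G E S ∧ B.nrm G E S = 1 ∧ ((n : ℝ) + 1) / c n < A.nrm G F (T.comp S) := by
    intro n
    obtain ⟨y, hy, hlt⟩ := hbdd (((n : ℝ) + 1) / c n)
    obtain ⟨G, S, h1, h2, rfl⟩ := hy
    exact ⟨G, S, h1, h2, hlt⟩
  choose G S hmem hone hbig using hsel
  -- the ℓ¹ direct sum
  haveI : Fact ((1 : ℝ≥0∞) ≤ 1) := ⟨le_refl _⟩
  let H : BanachSpc.{u} := ⟨lp (fun n => (G n).carrier) 1⟩
  -- the injections
  have honetoReal : (0 : ℝ) < (1 : ℝ≥0∞).toReal := by norm_num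
  let Jl : ∀ n : ℕ, (G n).carrier →ₗ[ℝ] H.carrier := fun n =>
    { toFun := fun x => lp.single 1 n x
      map_add' := fun x y => lp.single_add (E := fun n => (G n).carrier) 1 n x y
      map_smul' := fun r x => by simp [lp.single_smul] }
  have hJl_norm : ∀ (n : ℕ) (x : (G n).carrier), ‖Jl n x‖ = ‖x‖ := by
    intro n x
    have := lp.norm_single (E := fun n => (G n).carrier) (by norm_num : (0 : ℝ≥0∞) < 1) n x
    exact this
  let J : ∀ n : ℕ, (G n).carrier →L[ℝ] H.carrier := fun n =>
    LinearMap.mkContinuous (Jl n) 1 (fun x => by rw [hJl_norm n x, one_mul])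
  have hJnorm : ∀ n, ‖J n‖ ≤ 1 := fun n =>
    LinearMap.mkContinuous_norm_le (Jl n) zero_le_one _
  -- the projections
  let Pl : ∀ n : ℕ, H.carrier →ₗ[ℝ] (G n).carrier := fun n =>
    { toFun := fun f => f n
      map_add' := fun f g => rfl
      map_smul' := fun r f => rfl }
  let P : ∀ n : ℕ, H.carrier →L[ℝ] (G n).carrier := fun n =>
    LinearMap.mkContinuous (Pl n) 1 (fun f => by
      rw [one_mul]
      exact lp.norm_apply_le_norm one_ne_zero f n)
  have hPnorm : ∀ n, ‖P n‖ ≤ 1 := fun n =>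
    LinearMap.mkContinuous_norm_le (Pl n) zero_le_one _
  -- the building blocks
  let W : ℕ → (H.carrier →L[ℝ] E.carrier) := fun k => (S k).comp (P k)
  have hWmem : ∀ k, B.mem H E (W k) := by
    intro k
    have := hB.comp_mem H (G k) E E (P k) (S k) (ContinuousLinearMap.id ℝ E.carrier) (hmem k)
    rwa [ContinuousLinearMap.id_comp] at this
  have hWnrm : ∀ k, B.nrm H E (W k) ≤ 1 := by
    intro k
    have h1 := hB.comp_le H (G k) E E (P k) (S k) (ContinuousLinearMap.id ℝ E.carrier) (hmem k)
    rw [ContinuousLinearMap.id_comp, hone k] at h1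
    have h2 : ‖ContinuousLinearMap.id ℝ E.carrier‖ ≤ 1 := ContinuousLinearMap.norm_id_le
    have h3 := hPnorm k
    have h4 : (0:ℝ) ≤ ‖P k‖ := norm_nonneg _
    have h5 : (0:ℝ) ≤ ‖ContinuousLinearMap.id ℝ E.carrier‖ := norm_nonneg _
    nlinarith
  let V : ℕ → (H.carrier →L[ℝ] E.carrier) := fun k => c k • W k
  have hVmem : ∀ k, B.mem H E (V k) := fun k => hB.smul_mem H E (c k) (W k) (hWmem k)
  have hVnrm : ∀ k, B.nrm H E (V k) ^ q ≤ (1 / 2 : ℝ) ^ k := by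
    intro k
    have h1 : B.nrm H E (V k) = |c k| * B.nrm H E (W k) :=
      hB.nrm_smul H E (c k) (W k) (hWmem k)
    have h2 : B.nrm H E (V k) ≤ c k := by
      rw [h1, abs_of_pos (hc_pos k)]
      nlinarith [hWnrm k, hB.nonneg H E (W k), hc_pos k]
    calc B.nrm H E (V k) ^ q ≤ (c k) ^ q :=
          Real.rpow_le_rpow (hB.nonneg H E (V k)) h2 hB.p_pos.le
      _ = (1 / 2 : ℝ) ^ k := hcq k
  -- partial sums
  let U : ℕ → (H.carrier →L[ℝ] E.carrier) := fun m => ∑ k ∈ Finset.range (m + 1), V k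
  have hUmem : ∀ m, B.mem H E (U m) := fun m => hB.sum_mem _ V hVmem
  have hUdmem : ∀ m n, B.mem H E (U m - U n) := fun m n =>
    hB.sub_mem (hUmem m) (hUmem n)
  -- geometric control
  let g : ℕ → ℝ := fun M => ∑ k ∈ Finset.range M, (1 / 2 : ℝ) ^ k
  have hgC : CauchySeq g :=
    (hasSum_geometric_two.tendsto_sum_nat).cauchySeq
  -- Cauchy condition
  have hcauchy : ∀ ε > (0 : ℝ), ∃ N : ℕ, ∀ m ≥ N, ∀ n ≥ N,
      B.nrm H E (U m - U n) ^ q < ε := by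
    intro ε hε
    obtain ⟨N, hN⟩ := Metric.cauchySeq_iff.1 hgC ε hε
    refine ⟨N, ?_⟩
    have key : ∀ m n, N ≤ m → N ≤ n → n ≤ m → B.nrm H E (U m - U n) ^ q < ε := by
      intro m n hm hn hnm
      have hsum : U m - U n = ∑ k ∈ Finset.Ico (n + 1) (m + 1), V k := by
        rw [Finset.sum_Ico_eq_sub V (by omega)]
      have h1 : B.nrm H E (U m - U n) ^ q ≤ ∑ k ∈ Finset.Ico (n + 1) (m + 1), B.nrm H E (V k) ^ q := by
        rw [hsum]; exact hB.nrm_sum_le _ V hVmem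
      have h2 : ∑ k ∈ Finset.Ico (n + 1) (m + 1), B.nrm H E (V k) ^ q
          ≤ ∑ k ∈ Finset.Ico (n + 1) (m + 1), (1 / 2 : ℝ) ^ k :=
        Finset.sum_le_sum fun k _ => hVnrm k
      have h3 : ∑ k ∈ Finset.Ico (n + 1) (m + 1), (1 / 2 : ℝ) ^ k = g (m + 1) - g (n + 1) :=
        Finset.sum_Ico_eq_sub _ (by omega)
      have h4 : g (m + 1) - g (n + 1) ≤ dist (g (m + 1)) (g (n + 1)) := by
        rw [Real.dist_eq]; exact le_abs_self _
      have h5 := hN (m + 1) (by omega) (n + 1) (by omega)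
      linarith
    intro m hm n hn
    rcases le_total n m with h | h
    · exact key m n hm hn h
    · have hneg : U m - U n = -(U n - U m) := by abel
      rw [hneg, hB.nrm_neg (hUdmem n m)]
      exact key n m hn hm h
  -- limit
  obtain ⟨Ul, hUlmem, hUlconv⟩ := hB.complete H E U hUmem hcauchy
  have htend : Tendsto U atTop (nhds Ul) :=
    hB.tendsto_of_nrm (fun n => hB.sub_mem (hUmem n) hUlmem) hUlconv
  -- identify `Ul ∘ J n`
  have hPJself : ∀ n, (P n).comp (J n) = ContinuousLinearMap.id ℝ (G n).carrier := by
    intro n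
    ext x
    exact lp.single_apply_self (E := fun m => (G m).carrier) 1 n x
  have hPJne : ∀ k n, k ≠ n → (P k).comp (J n) = 0 := by
    intro k n hkn
    ext x
    exact lp.single_apply_ne (E := fun m => (G m).carrier) 1 n x hkn
  have hUJ : ∀ n, Ul.comp (J n) = c n • S n := by
    intro n
    have hcont : Continuous (fun (g : H.carrier →L[ℝ] E.carrier) => g.comp (J n)) :=
      ((ContinuousLinearMap.compL ℝ (G n).carrier H.carrier E.carrier).flip (J n)).continuous
    have htm : Tendsto (fun m => (U m).comp (J n)) atTop (nhds (Ul.comp (J n))) :=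
      ((hcont.tendsto Ul).comp htend)
    have hev : ∀ m ≥ n, (U m).comp (J n) = c n • S n := by
      intro m hm
      show (∑ k ∈ Finset.range (m + 1), V k).comp (J n) = c n • S n
      rw [ContinuousLinearMap.finset_sum_comp]
      rw [Finset.sum_eq_single_of_mem n (Finset.mem_range.2 (by omega))]
      · show (c n • W n).comp (J n) = c n • S n
        rw [ContinuousLinearMap.smul_comp]
        congr 1
        show ((S n).comp (P n)).comp (J n) = S n
        rw [ContinuousLinearMap.comp_assoc, hPJself n, ContinuousLinearMap.comp_id]
      · intro k _ hkn
        show (c k • W k).comp (J n) = 0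
        rw [ContinuousLinearMap.smul_comp]
        have : (W k).comp (J n) = 0 := by
          show ((S k).comp (P k)).comp (J n) = 0
          rw [ContinuousLinearMap.comp_assoc, hPJne k n hkn, ContinuousLinearMap.comp_zero]
        rw [this, smul_zero]
    have hev' : (fun m => (U m).comp (J n)) =ᶠ[atTop] (fun _ => c n • S n) :=
      eventually_atTop.2 ⟨n, hev⟩
    have htm2 : Tendsto (fun m => (U m).comp (J n)) atTop (nhds (c n • S n)) :=
      Tendsto.congr' hev'.symm tendsto_const_nhds
    exact tendsto_nhds_unique htm htm2
  -- contradiction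
  have hTUmem : A.mem H F (T.comp Ul) := hT H Ul hUlmem
  have hMnn : 0 ≤ A.nrm H F (T.comp Ul) := hA.nonneg H F _
  have hcontr : ∀ n : ℕ, (n : ℝ) + 1 < A.nrm H F (T.comp Ul) := by
    intro n
    have hTSmem : A.mem (G n) F (T.comp (S n)) := hT (G n) (S n) (hmem n)
    have heq : (T.comp Ul).comp (J n) = c n • (T.comp (S n)) := by
      rw [ContinuousLinearMap.comp_assoc, hUJ n, ContinuousLinearMap.comp_smul]
    have h1 : A.nrm (G n) F ((T.comp Ul).comp (J n)) = c n * A.nrm (G n) F (T.comp (S n)) := by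
      rw [heq, hA.nrm_smul (G n) F (c n) _ hTSmem, abs_of_pos (hc_pos n)]
    have h2 : (n : ℝ) + 1 < c n * A.nrm (G n) F (T.comp (S n)) := by
      have := (div_lt_iff₀ (hc_pos n)).1 (hbig n)
      linarith [this]
    have h3 := hA.comp_le (G n) H F F (J n) (T.comp Ul) (ContinuousLinearMap.id ℝ F.carrier) hTUmem
    rw [ContinuousLinearMap.id_comp] at h3
    have h4 : ‖ContinuousLinearMap.id ℝ F.carrier‖ ≤ 1 := ContinuousLinearMap.norm_id_le
    have h5 := hJnorm n
    have h6 : (0:ℝ) ≤ ‖J n‖ := norm_nonneg _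
    have h7 : (0:ℝ) ≤ ‖ContinuousLinearMap.id ℝ F.carrier‖ := norm_nonneg _
    have h8 : ‖ContinuousLinearMap.id ℝ F.carrier‖ * A.nrm H F (T.comp Ul) * ‖J n‖
        ≤ A.nrm H F (T.comp Ul) := by
      calc ‖ContinuousLinearMap.id ℝ F.carrier‖ * A.nrm H F (T.comp Ul) * ‖J n‖
          ≤ ‖ContinuousLinearMap.id ℝ F.carrier‖ * A.nrm H F (T.comp Ul) :=
            mul_le_of_le_one_right (mul_nonneg h7 hMnn) h5
        _ ≤ A.nrm H F (T.comp Ul) := mul_le_of_le_one_left hMnn h4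
    linarith [h1, h2, h3, h8]
  obtain ⟨n, hn⟩ := exists_nat_gt (A.nrm H F (T.comp Ul))
  have := hcontr n
  linarith

end RightQuotientProof2

section RightQuotientProof3

open Filter ContinuousLinearMap

variable {p q : ℝ} {A B : OperatorIdeal.{u}}

lemma quot_nrm_nonneg (hA : IsPBanachIdeal p A) (E F : BanachSpc.{u})
    (T : E.carrier →L[ℝ] F.carrier) : 0 ≤ (A.rightQuotient B).nrm E F T :=
  Real.sSup_nonneg (qset_nonneg hA E F T)

lemma quot_opnorm_le (hA : IsPBanachIdeal p A) (hB : IsPBanachIdeal q B)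
    {E F : BanachSpc.{u}} {T : E.carrier →L[ℝ] F.carrier}
    (hT : (A.rightQuotient B).mem E F T) :
    ‖T‖ ≤ (A.rightQuotient B).nrm E F T := by
  refine ContinuousLinearMap.opNorm_le_bound _ (quot_nrm_nonneg hA E F T) ?_
  intro x
  by_cases hx : x = 0
  · simp [hx, quot_nrm_nonneg hA E F T]
  · have hxn : (0:ℝ) < ‖x‖ := norm_pos_iff.2 hx
    let G₀ : BanachSpc.{u} := ⟨ULift.{u} ℝ⟩
    let al : G₀.carrier →ₗ[ℝ] ℝ :=
      { toFun := fun t => t.down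
        map_add' := fun s t => rfl
        map_smul' := fun r t => rfl }
    have hal : ∀ t : G₀.carrier, ‖al t‖ = ‖t‖ := fun t => rfl
    let a : G₀.carrier →L[ℝ] ℝ :=
      LinearMap.mkContinuous al 1 (fun t => by rw [hal, one_mul])
    have ha_le : ‖a‖ ≤ 1 := LinearMap.mkContinuous_norm_le al zero_le_one _
    have ha_ge : (1:ℝ) ≤ ‖a‖ := by
      have h1 : ‖(ULift.up (1:ℝ) : G₀.carrier)‖ = 1 := by
        show ‖(1:ℝ)‖ = 1
        simp
      have := a.unit_le_opNorm (ULift.up (1:ℝ)) (le_of_eq h1)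
      have h2 : ‖a (ULift.up (1:ℝ))‖ = 1 := by
        show ‖(1:ℝ)‖ = 1
        simp
      rwa [h2] at this
    have ha : ‖a‖ = 1 := le_antisymm ha_le ha_ge
    set y : E.carrier := ‖x‖⁻¹ • x with hy
    have hyn : ‖y‖ = 1 := norm_smul_inv_norm hx
    set S₀ : G₀.carrier →L[ℝ] E.carrier := a.smulRight y with hS₀
    have hfr : FinRankOp S₀ := by
      unfold FinRankOp
      have hle : LinearMap.range ((S₀ : G₀.carrier →L[ℝ] E.carrier) :
          G₀.carrier →ₗ[ℝ] E.carrier) ≤ Submodule.span ℝ {y} := by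
        rintro z ⟨t, rfl⟩
        show a t • y ∈ Submodule.span ℝ {y}
        exact Submodule.smul_mem _ _ (Submodule.mem_span_singleton_self y)
      exact Submodule.finiteDimensional_of_le hle
    have hmemS₀ : B.mem G₀ E S₀ := hB.finrank_mem G₀ E S₀ hfr
    have hnrmS₀ : B.nrm G₀ E S₀ = 1 := by
      refine le_antisymm ?_ ?_
      · have := hB.rank_one_le G₀ E a y
        rwa [ha, hyn, one_mul] at this
      · have h1 : ‖S₀‖ ≤ B.nrm G₀ E S₀ := hB.opnorm_le G₀ E S₀ hmemS₀
        have h2 : ‖S₀‖ = 1 := by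
          rw [hS₀, ContinuousLinearMap.norm_smulRight_apply, ha, hyn, one_mul]
        linarith
    have hTS : T.comp S₀ = a.smulRight (T y) := by
      ext t
      show T (a t • y) = a t • T y
      rw [map_smul]
    have hmemTS : A.mem G₀ F (T.comp S₀) := hT G₀ S₀ hmemS₀
    have helem : A.nrm G₀ F (T.comp S₀) ∈ QSet A B E F T := ⟨G₀, S₀, hmemS₀, hnrmS₀, rfl⟩
    have h9 : ‖x‖⁻¹ * ‖T x‖ ≤ (A.rightQuotient B).nrm E F T := by
      have h1 : ‖T.comp S₀‖ ≤ A.nrm G₀ F (T.comp S₀) := hA.opnorm_le G₀ F _ hmemTS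
      have h2 : ‖T.comp S₀‖ = ‖x‖⁻¹ * ‖T x‖ := by
        rw [hTS, ContinuousLinearMap.norm_smulRight_apply, ha, one_mul, hy, map_smul,
          norm_smul, norm_inv, Real.norm_eq_abs, abs_of_pos hxn]
      have h3 : A.nrm G₀ F (T.comp S₀) ≤ (A.rightQuotient B).nrm E F T :=
        le_csSup (quot_bddAbove hA hB hT) helem
      linarith
    calc ‖T x‖ = (‖x‖⁻¹ * ‖x‖) * ‖T x‖ := by rw [inv_mul_cancel₀ hxn.ne', one_mul]
      _ = (‖x‖⁻¹ * ‖T x‖) * ‖x‖ := by ring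
      _ ≤ (A.rightQuotient B).nrm E F T * ‖x‖ :=
          mul_le_mul_of_nonneg_right h9 (norm_nonneg x)

lemma quot_nrm_comp_le (hA : IsPBanachIdeal p A) (hB : IsPBanachIdeal q B)
    {E F : BanachSpc.{u}} {T : E.carrier →L[ℝ] F.carrier}
    (hT : (A.rightQuotient B).mem E F T)
    {G : BanachSpc.{u}} (S : G.carrier →L[ℝ] E.carrier) (hS : B.mem G E S) :
    A.nrm G F (T.comp S) ≤ (A.rightQuotient B).nrm E F T * B.nrm G E S := by
  by_cases h0 : B.nrm G E S = 0
  · have hS0 : S = 0 := norm_le_zero_iff.1 (h0 ▸ hB.opnorm_le G E S hS)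
    rw [hS0] at h0 ⊢
    rw [ContinuousLinearMap.comp_zero, hA.nrm_zero, h0, mul_zero]
  · have hpos : 0 < B.nrm G E S := lt_of_le_of_ne (hB.nonneg G E S) (Ne.symm h0)
    set S' : G.carrier →L[ℝ] E.carrier := (B.nrm G E S)⁻¹ • S with hS'
    have hS'mem : B.mem G E S' := hB.smul_mem G E _ S hS
    have hS'nrm : B.nrm G E S' = 1 := by
      rw [hS', hB.nrm_smul G E _ S hS, abs_of_pos (inv_pos.2 hpos), inv_mul_cancel₀ h0]
    have h1 : A.nrm G F (T.comp S') ≤ (A.rightQuotient B).nrm E F T :=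
      le_csSup (quot_bddAbove hA hB hT) ⟨G, S', hS'mem, hS'nrm, rfl⟩
    have hSS : S = (B.nrm G E S) • S' := by
      rw [hS', smul_smul, mul_inv_cancel₀ h0, one_smul]
    calc A.nrm G F (T.comp S) = A.nrm G F ((B.nrm G E S) • (T.comp S')) := by
          rw [← ContinuousLinearMap.comp_smul, ← hSS]
      _ = |B.nrm G E S| * A.nrm G F (T.comp S') :=
          hA.nrm_smul G F _ _ (hT G S' hS'mem)
      _ = B.nrm G E S * A.nrm G F (T.comp S') := by rw [abs_of_pos hpos]
      _ ≤ B.nrm G E S * (A.rightQuotient B).nrm E F T :=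
          mul_le_mul_of_nonneg_left h1 hpos.le
      _ = (A.rightQuotient B).nrm E F T * B.nrm G E S := mul_comm _ _

end RightQuotientProof3


/-- The right-`B`-quotient `A ∘ B⁻¹` of a `p`-Banach ideal `A` by a `q`-Banach
ideal `B` is a `p`-Banach ideal. -/
theorem rightQuotient_is_pBanach (p q : ℝ) (A B : OperatorIdeal.{u})
    (hA : IsPBanachIdeal p A) (hB : IsPBanachIdeal q B) :
    IsPBanachIdeal p (A.rightQuotient B) := by
  constructor
  -- p_pos
  case p_pos => exact hA.p_pos
  -- p_le_one
  case p_le_one => exact hA.p_le_one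
  -- finrank_mem
  case finrank_mem =>
    intro E F T hFR G S hS
    refine hA.finrank_mem G F (T.comp S) ?_
    unfold FinRankOp at hFR ⊢
    haveI := hFR
    have hle : LinearMap.range ((T.comp S : G.carrier →L[ℝ] F.carrier) :
        G.carrier →ₗ[ℝ] F.carrier) ≤
        LinearMap.range ((T : E.carrier →L[ℝ] F.carrier) : E.carrier →ₗ[ℝ] F.carrier) := by
      rw [ContinuousLinearMap.toLinearMap_comp]
      exact LinearMap.range_comp_le_range _ _
    exact Submodule.finiteDimensional_of_le hle
  -- nonneg
  case nonneg => exact fun E F T => quot_nrm_nonneg hA E F T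
  -- opnorm_le
  case opnorm_le => exact fun E F T hT => quot_opnorm_le hA hB hT
  -- rank_one_le
  case rank_one_le =>
    intro E F a y
    refine Real.sSup_le ?_ (mul_nonneg (norm_nonneg a) (norm_nonneg y))
    rintro r ⟨G, S, hSm, hS1, rfl⟩
    have hcomp : (a.smulRight y).comp S = (a.comp S).smulRight y := by
      ext t
      simp
    rw [hcomp]
    have hSle : ‖S‖ ≤ 1 := hS1 ▸ hB.opnorm_le G E S hSm
    calc A.nrm G F ((a.comp S).smulRight y) ≤ ‖a.comp S‖ * ‖y‖ := hA.rank_one_le G F _ y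
      _ ≤ (‖a‖ * ‖S‖) * ‖y‖ :=
          mul_le_mul_of_nonneg_right (ContinuousLinearMap.opNorm_comp_le a S) (norm_nonneg y)
      _ = (‖a‖ * ‖y‖) * ‖S‖ := by ring
      _ ≤ ‖a‖ * ‖y‖ :=
          mul_le_of_le_one_right (mul_nonneg (norm_nonneg a) (norm_nonneg y)) hSle
  -- smul_mem
  case smul_mem =>
    intro E F c T hT G S hS
    rw [ContinuousLinearMap.smul_comp]
    exact hA.smul_mem G F c _ (hT G S hS)
  -- nrm_smul
  case nrm_smul =>
    intro E F c T hT
    show sSup (QSet A B E F (c • T)) = |c| * sSup (QSet A B E F T)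
    by_cases hc : c = 0
    · subst hc
      have hz : ∀ r ∈ QSet A B E F ((0:ℝ) • T), r = 0 := by
        rintro r ⟨G, S, h1, h2, rfl⟩
        rw [zero_smul, ContinuousLinearMap.zero_comp, hA.nrm_zero]
      have h1 : sSup (QSet A B E F ((0:ℝ) • T)) ≤ 0 :=
        Real.sSup_le (fun r hr => le_of_eq (hz r hr)) le_rfl
      have h2 : 0 ≤ sSup (QSet A B E F ((0:ℝ) • T)) :=
        Real.sSup_nonneg (fun r hr => ge_of_eq (hz r hr))
      rw [le_antisymm h1 h2, abs_zero, zero_mul]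
    · have himg : QSet A B E F (c • T) = (fun r => |c| * r) '' QSet A B E F T := by
        ext r
        constructor
        · rintro ⟨G, S, h1, h2, rfl⟩
          exact ⟨A.nrm G F (T.comp S), ⟨G, S, h1, h2, rfl⟩, by
            rw [ContinuousLinearMap.smul_comp, hA.nrm_smul G F c _ (hT G S h1)]⟩
        · rintro ⟨r', ⟨G, S, h1, h2, rfl⟩, rfl⟩
          exact ⟨G, S, h1, h2, by
            rw [ContinuousLinearMap.smul_comp, hA.nrm_smul G F c _ (hT G S h1)]⟩
      rw [himg, sSup_mul_of_nonneg (abs_pos.2 hc) (qset_nonneg hA E F T)]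
  -- add_mem
  case add_mem =>
    intro E F S T hS hT G R hR
    rw [ContinuousLinearMap.add_comp]
    exact hA.add_mem G F _ _ (hS G R hR) (hT G R hR)
  -- p_triangle
  case p_triangle =>
    intro E F S T hS hT
    have hp := hA.p_pos
    set X : ℝ := (A.rightQuotient B).nrm E F S ^ p + (A.rightQuotient B).nrm E F T ^ p with hX
    have hXnn : 0 ≤ X :=
      add_nonneg (Real.rpow_nonneg (quot_nrm_nonneg hA E F S) p)
        (Real.rpow_nonneg (quot_nrm_nonneg hA E F T) p)
    have hb : ∀ r ∈ QSet A B E F (S + T), r ≤ X ^ p⁻¹ := by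
      rintro r ⟨G, R, h1, h2, rfl⟩
      have hrnn : 0 ≤ A.nrm G F ((S + T).comp R) := hA.nonneg G F _
      have key : A.nrm G F ((S + T).comp R) ^ p ≤ X := by
        rw [ContinuousLinearMap.add_comp]
        have hSle : A.nrm G F (S.comp R) ≤ (A.rightQuotient B).nrm E F S :=
          le_csSup (quot_bddAbove hA hB hS) ⟨G, R, h1, h2, rfl⟩
        have hTle : A.nrm G F (T.comp R) ≤ (A.rightQuotient B).nrm E F T :=
          le_csSup (quot_bddAbove hA hB hT) ⟨G, R, h1, h2, rfl⟩
        calc A.nrm G F (S.comp R + T.comp R) ^ p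
            ≤ A.nrm G F (S.comp R) ^ p + A.nrm G F (T.comp R) ^ p :=
              hA.p_triangle G F _ _ (hS G R h1) (hT G R h1)
          _ ≤ X :=
              add_le_add (Real.rpow_le_rpow (hA.nonneg G F _) hSle hp.le)
                (Real.rpow_le_rpow (hA.nonneg G F _) hTle hp.le)
      calc A.nrm G F ((S + T).comp R)
          = (A.nrm G F ((S + T).comp R) ^ p) ^ p⁻¹ := (Real.rpow_rpow_inv hrnn hp.ne').symm
        _ ≤ X ^ p⁻¹ :=
            Real.rpow_le_rpow (Real.rpow_nonneg hrnn p) key (inv_nonneg.2 hp.le)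
    have hsle : sSup (QSet A B E F (S + T)) ≤ X ^ p⁻¹ :=
      Real.sSup_le hb (Real.rpow_nonneg hXnn _)
    show sSup (QSet A B E F (S + T)) ^ p ≤ X
    calc sSup (QSet A B E F (S + T)) ^ p ≤ (X ^ p⁻¹) ^ p :=
        Real.rpow_le_rpow (Real.sSup_nonneg (qset_nonneg hA E F (S + T))) hsle hp.le
      _ = X := Real.rpow_inv_rpow hXnn hp.ne'
  -- comp_mem
  case comp_mem =>
    intro E F G H R T S hT G' R' hR'
    have hRR' : B.mem G' F (R.comp R') := by
      have := hB.comp_mem G' G' E F (ContinuousLinearMap.id ℝ G'.carrier) R' R hR'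
      rwa [ContinuousLinearMap.comp_id] at this
    have hassoc : (S.comp (T.comp R)).comp R' =
        S.comp ((T.comp (R.comp R')).comp (ContinuousLinearMap.id ℝ G'.carrier)) := by
      ext x; rfl
    rw [hassoc]
    exact hA.comp_mem G' G' G H (ContinuousLinearMap.id ℝ G'.carrier)
      (T.comp (R.comp R')) S (hT G' (R.comp R') hRR')
  -- comp_le
  case comp_le =>
    intro E F G H R T S hT
    refine Real.sSup_le ?_ ?_
    swap
    · have := quot_nrm_nonneg (B := B) hA F G T
      positivity
    rintro r ⟨G', R', h1, h2, rfl⟩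
    have hRR' : B.mem G' F (R.comp R') := by
      have := hB.comp_mem G' G' E F (ContinuousLinearMap.id ℝ G'.carrier) R' R h1
      rwa [ContinuousLinearMap.comp_id] at this
    have hRR'nrm : B.nrm G' F (R.comp R') ≤ ‖R‖ := by
      have h3 := hB.comp_le G' G' E F (ContinuousLinearMap.id ℝ G'.carrier) R' R h1
      rw [ContinuousLinearMap.comp_id, h2] at h3
      have h4 : ‖ContinuousLinearMap.id ℝ G'.carrier‖ ≤ 1 := ContinuousLinearMap.norm_id_le
      nlinarith [norm_nonneg R, norm_nonneg (ContinuousLinearMap.id ℝ G'.carrier)]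
    have hX : A.nrm G' G (T.comp (R.comp R')) ≤ (A.rightQuotient B).nrm F G T * ‖R‖ :=
      le_trans (quot_nrm_comp_le hA hB hT _ hRR')
        (mul_le_mul_of_nonneg_left hRR'nrm (quot_nrm_nonneg hA F G T))
    have hassoc : (S.comp (T.comp R)).comp R' =
        S.comp ((T.comp (R.comp R')).comp (ContinuousLinearMap.id ℝ G'.carrier)) := by
      ext x; rfl
    rw [hassoc]
    have h5 := hA.comp_le G' G' G H (ContinuousLinearMap.id ℝ G'.carrier)
      (T.comp (R.comp R')) S (hT G' (R.comp R') hRR')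
    calc A.nrm G' H (S.comp ((T.comp (R.comp R')).comp (ContinuousLinearMap.id ℝ G'.carrier)))
        ≤ ‖S‖ * A.nrm G' G (T.comp (R.comp R')) * ‖ContinuousLinearMap.id ℝ G'.carrier‖ := h5
      _ ≤ ‖S‖ * A.nrm G' G (T.comp (R.comp R')) :=
          mul_le_of_le_one_right (mul_nonneg (norm_nonneg S) (hA.nonneg G' G _))
            ContinuousLinearMap.norm_id_le
      _ ≤ ‖S‖ * ((A.rightQuotient B).nrm F G T * ‖R‖) :=
          mul_le_mul_of_nonneg_left hX (norm_nonneg S)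
      _ = ‖S‖ * (A.rightQuotient B).nrm F G T * ‖R‖ := by ring
  -- complete
  case complete =>
    intro E F f hfm hfc
    have hdm : ∀ m n, (A.rightQuotient B).mem E F (f m - f n) := by
      intro m n G S hS
      rw [ContinuousLinearMap.sub_comp]
      exact hA.sub_mem (hfm m G S hS) (hfm n G S hS)
    have hopC : CauchySeq f := by
      rw [Metric.cauchySeq_iff]
      intro ε hε
      obtain ⟨N, hN⟩ := hfc (ε ^ p) (Real.rpow_pos_of_pos hε p)
      refine ⟨N, fun m hm n hn => ?_⟩
      have h1 := hN m hm n hn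
      have h2 : ‖f m - f n‖ ≤ (A.rightQuotient B).nrm E F (f m - f n) :=
        quot_opnorm_le hA hB (hdm m n)
      have h3 : (A.rightQuotient B).nrm E F (f m - f n) < ε := by
        by_contra hc
        push_neg at hc
        exact absurd (Real.rpow_le_rpow hε.le hc hA.p_pos.le) (not_le.2 h1)
      rw [dist_eq_norm]
      linarith
    obtain ⟨T, hTlim⟩ := cauchySeq_tendsto_of_complete hopC
    have hkey : ∀ (G : BanachSpc.{u}) (S : G.carrier →L[ℝ] E.carrier), B.mem G E S →
        B.nrm G E S = 1 → A.mem G F (T.comp S) ∧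
          ∀ ε > (0:ℝ), ∃ N, ∀ n ≥ N, A.nrm G F ((f n).comp S - T.comp S) ^ p < ε := by
      intro G S hS h1
      have hgm : ∀ n, A.mem G F ((f n).comp S) := fun n => hfm n G S hS
      have hgc : ∀ ε > (0:ℝ), ∃ N, ∀ m ≥ N, ∀ n ≥ N,
          A.nrm G F ((f m).comp S - (f n).comp S) ^ p < ε := by
        intro ε hε
        obtain ⟨N, hN⟩ := hfc ε hε
        refine ⟨N, fun m hm n hn => ?_⟩
        have h2 : A.nrm G F ((f m).comp S - (f n).comp S) ≤
            (A.rightQuotient B).nrm E F (f m - f n) := by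
          rw [← ContinuousLinearMap.sub_comp]
          exact le_csSup (quot_bddAbove hA hB (hdm m n)) ⟨G, S, hS, h1, rfl⟩
        calc A.nrm G F ((f m).comp S - (f n).comp S) ^ p
            ≤ ((A.rightQuotient B).nrm E F (f m - f n)) ^ p :=
              Real.rpow_le_rpow (hA.nonneg G F _) h2 hA.p_pos.le
          _ < ε := hN m hm n hn
      obtain ⟨V, hVmem, hVconv⟩ := hA.complete G F (fun n => (f n).comp S) hgm hgc
      have htv : Filter.Tendsto (fun n => (f n).comp S) Filter.atTop (nhds V) :=
        hA.tendsto_of_nrm (fun n => hA.sub_mem (hgm n) hVmem) hVconv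
      have htv2 : Filter.Tendsto (fun n => (f n).comp S) Filter.atTop (nhds (T.comp S)) := by
        have hcont : Continuous (fun (g : E.carrier →L[ℝ] F.carrier) => g.comp S) :=
          ((ContinuousLinearMap.compL ℝ G.carrier E.carrier F.carrier).flip S).continuous
        exact (hcont.tendsto T).comp hTlim
      have hVT : V = T.comp S := tendsto_nhds_unique htv htv2
      rw [← hVT]
      exact ⟨hVmem, hVconv⟩
    refine ⟨T, ?_, ?_⟩
    · -- membership of the limit
      intro G S hS
      by_cases h0 : B.nrm G E S = 0
      · have hS0 : S = 0 := norm_le_zero_iff.1 (h0 ▸ hB.opnorm_le G E S hS)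
        rw [hS0, ContinuousLinearMap.comp_zero]
        exact hA.mem_zero G F
      · have hpos : 0 < B.nrm G E S := lt_of_le_of_ne (hB.nonneg G E S) (Ne.symm h0)
        set S' : G.carrier →L[ℝ] E.carrier := (B.nrm G E S)⁻¹ • S with hS'
        have hS'mem : B.mem G E S' := hB.smul_mem G E _ S hS
        have hS'nrm : B.nrm G E S' = 1 := by
          rw [hS', hB.nrm_smul G E _ S hS, abs_of_pos (inv_pos.2 hpos), inv_mul_cancel₀ h0]
        have hmem' := (hkey G S' hS'mem hS'nrm).1
        have hSS : S = (B.nrm G E S) • S' := by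
          rw [hS', smul_smul, mul_inv_cancel₀ h0, one_smul]
        rw [hSS, ContinuousLinearMap.comp_smul]
        exact hA.smul_mem G F _ _ hmem'
    · -- convergence in the quotient norm
      intro ε hε
      obtain ⟨N, hN⟩ := hfc (ε / 4) (by linarith)
      refine ⟨N, fun n hn => ?_⟩
      have hp := hA.p_pos
      have hnn : 0 ≤ sSup (QSet A B E F (f n - T)) :=
        Real.sSup_nonneg (qset_nonneg hA E F (f n - T))
      have hbound : ∀ r ∈ QSet A B E F (f n - T), r ≤ (ε / 2) ^ p⁻¹ := by
        rintro r ⟨G, S, hS, h1, rfl⟩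
        have hrnn : 0 ≤ A.nrm G F ((f n - T).comp S) := hA.nonneg G F _
        obtain ⟨M, hM⟩ := (hkey G S hS h1).2 (ε / 4) (by linarith)
        set m : ℕ := max N M with hm
        have hm1 : m ≥ N := le_max_left _ _
        have hm2 : m ≥ M := le_max_right _ _
        have hsplit : (f n - T).comp S = (f n - f m).comp S + ((f m).comp S - T.comp S) := by
          rw [ContinuousLinearMap.sub_comp, ContinuousLinearMap.sub_comp]
          abel
        have hmem1 : A.mem G F ((f n - f m).comp S) := hdm n m G S hS
        have hmem2 : A.mem G F ((f m).comp S - T.comp S) :=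
          hA.sub_mem (hfm m G S hS) (hkey G S hS h1).1
        have ht1 : A.nrm G F ((f n - f m).comp S) ^ p < ε / 4 := by
          have h2 : A.nrm G F ((f n - f m).comp S) ≤
              (A.rightQuotient B).nrm E F (f n - f m) :=
            le_csSup (quot_bddAbove hA hB (hdm n m)) ⟨G, S, hS, h1, rfl⟩
          calc A.nrm G F ((f n - f m).comp S) ^ p
              ≤ ((A.rightQuotient B).nrm E F (f n - f m)) ^ p :=
                Real.rpow_le_rpow (hA.nonneg G F _) h2 hp.le
            _ < ε / 4 := hN n hn m hm1
        have ht2 : A.nrm G F ((f m).comp S - T.comp S) ^ p < ε / 4 := hM m hm2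
        have hkey2 : A.nrm G F ((f n - T).comp S) ^ p < ε / 2 := by
          rw [hsplit]
          have := hA.p_triangle G F _ _ hmem1 hmem2
          linarith
        calc A.nrm G F ((f n - T).comp S)
            = (A.nrm G F ((f n - T).comp S) ^ p) ^ p⁻¹ :=
              (Real.rpow_rpow_inv hrnn hp.ne').symm
          _ ≤ (ε / 2) ^ p⁻¹ :=
              Real.rpow_le_rpow (Real.rpow_nonneg hrnn p) hkey2.le (inv_nonneg.2 hp.le)
      have hs1 : sSup (QSet A B E F (f n - T)) ≤ (ε / 2) ^ p⁻¹ :=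
        Real.sSup_le hbound (Real.rpow_nonneg (by linarith) _)
      show sSup (QSet A B E F (f n - T)) ^ p < ε
      calc sSup (QSet A B E F (f n - T)) ^ p ≤ ((ε / 2) ^ p⁻¹) ^ p :=
          Real.rpow_le_rpow hnn hs1 hp.le
        _ = ε / 2 := Real.rpow_inv_rpow (by linarith) hp.ne'
        _ < ε := by linarith
end
end

section
/- For any p-Banach operator ideal (A, **A**) (0 < p ≤ 1), the conjugate ideal (A^Δ, **A**^Δ), defined by T ∈ A^Δ(E,F) iff there is c ≥ 0 with |tr(TL)| ≤ c·**A**(L) for all finite rank operators L ∈ F(F,E), with **A**^Δ(T) the infimum of such c, is a Banach operator ideal (i.e., 1-normed and complete). -/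
noncomputable section

open scoped Classical

universe u

-- general rank one trace
lemma trace_rankOne {M : Type u} [AddCommGroup M] [Module ℝ M] [FiniteDimensional ℝ M]
    (c : M →ₗ[ℝ] ℝ) (v : M) :
    LinearMap.trace ℝ M (c.smulRight v) = c v := by
  have h1 : c.smulRight v = (LinearMap.toSpanSingleton ℝ M v) ∘ₗ c := by
    ext x; simp [LinearMap.toSpanSingleton_apply]
  have h2 : c ∘ₗ (LinearMap.toSpanSingleton ℝ M v) = (c v) • LinearMap.id := by
    ext r; simp [LinearMap.toSpanSingleton_apply, mul_comm]
  rw [h1, LinearMap.trace_comp_comm', h2, map_smul, LinearMap.trace_id]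
  simp

-- invariance: trace of restriction to any fin-dim p containing range
lemma trace_restrict_eq_fTrace {E : BanachSpc.{u}} (T : E.carrier →L[ℝ] E.carrier)
    (p : Submodule ℝ E.carrier) [FiniteDimensional ℝ p]
    (hp : LinearMap.range (T : E.carrier →ₗ[ℝ] E.carrier) ≤ p) :
    LinearMap.trace ℝ p ((T : E.carrier →ₗ[ℝ] E.carrier).restrict
      (p := p) (q := p) (fun x _ => hp (LinearMap.mem_range_self _ x))) = fTrace T := by
  set r := LinearMap.range (T : E.carrier →ₗ[ℝ] E.carrier) with hr
  haveI : FiniteDimensional ℝ r := Submodule.finiteDimensional_of_le hp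
  set f : p →ₗ[ℝ] r := LinearMap.codRestrict r ((T : E.carrier →ₗ[ℝ] E.carrier).domRestrict p)
    (fun x => show (T : E.carrier →ₗ[ℝ] E.carrier) x.1 ∈ r from LinearMap.mem_range_self _ _)
    with hf
  set g : r →ₗ[ℝ] p := Submodule.inclusion hp with hg
  have h1 : (T : E.carrier →ₗ[ℝ] E.carrier).restrict
      (p := p) (q := p) (fun x _ => hp (LinearMap.mem_range_self _ x)) = g ∘ₗ f := by
    ext x; rfl
  have h2 : (T : E.carrier →ₗ[ℝ] E.carrier).restrict
      (p := r) (q := r) (fun x _ => LinearMap.mem_range_self _ x) = f ∘ₗ g := by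
    ext x; rfl
  rw [h1, LinearMap.trace_comp_comm', ← h2, fTrace]

lemma fTrace_sum_rankOne {F : BanachSpc.{u}} {n : ℕ} (b : Fin n → (F.carrier →L[ℝ] ℝ))
    (x : Fin n → F.carrier) :
    fTrace (∑ i, (b i).smulRight (x i)) = ∑ i, b i (x i) := by
  set S : F.carrier →L[ℝ] F.carrier := ∑ i, (b i).smulRight (x i) with hS
  set p : Submodule ℝ F.carrier := Submodule.span ℝ (Set.range x) with hp
  haveI : FiniteDimensional ℝ p := FiniteDimensional.span_of_finite ℝ (Set.finite_range x)
  have hxp : ∀ i, x i ∈ p := fun i => Submodule.subset_span (Set.mem_range_self i)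
  have hrange : LinearMap.range (S : F.carrier →ₗ[ℝ] F.carrier) ≤ p := by
    rintro _ ⟨z, rfl⟩
    have : S z = ∑ i, b i z • x i := by
      simp [hS, ContinuousLinearMap.sum_apply]
    rw [show ((S : F.carrier →ₗ[ℝ] F.carrier) z) = S z from rfl, this]
    exact Submodule.sum_mem _ fun i _ => Submodule.smul_mem _ _ (hxp i)
  rw [← trace_restrict_eq_fTrace S p hrange]
  have hres : (S : F.carrier →ₗ[ℝ] F.carrier).restrict
      (p := p) (q := p) (fun z _ => hrange (LinearMap.mem_range_self _ z)) =
      ∑ i, (((b i : F.carrier →ₗ[ℝ] ℝ).domRestrict p).smulRight (⟨x i, hxp i⟩ : p)) := by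
    ext z
    simp only [LinearMap.restrict_apply, LinearMap.sum_apply, LinearMap.smulRight_apply,
      LinearMap.domRestrict_apply]
    rw [Submodule.coe_sum]
    simp [hS, ContinuousLinearMap.sum_apply]
  rw [hres, map_sum]
  congr 1; funext i
  exact trace_rankOne _ _

lemma finRankOp_sum_rankOne {E F : BanachSpc.{u}} {n : ℕ} (b : Fin n → (E.carrier →L[ℝ] ℝ))
    (x : Fin n → F.carrier) : FinRankOp (∑ i, (b i).smulRight (x i)) := by
  set S : E.carrier →L[ℝ] F.carrier := ∑ i, (b i).smulRight (x i) with hS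
  have hrange : LinearMap.range (S : E.carrier →ₗ[ℝ] F.carrier) ≤
      Submodule.span ℝ (Set.range x) := by
    rintro _ ⟨z, rfl⟩
    have : S z = ∑ i, b i z • x i := by simp [hS, ContinuousLinearMap.sum_apply]
    rw [show ((S : E.carrier →ₗ[ℝ] F.carrier) z) = S z from rfl, this]
    exact Submodule.sum_mem _ fun i _ =>
      Submodule.smul_mem _ _ (Submodule.subset_span (Set.mem_range_self i))
  haveI : FiniteDimensional ℝ (Submodule.span ℝ (Set.range x)) :=
    FiniteDimensional.span_of_finite ℝ (Set.finite_range x)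
  exact Submodule.finiteDimensional_of_le hrange

lemma exists_decomp {E F : BanachSpc.{u}} (L : F.carrier →L[ℝ] E.carrier) (hL : FinRankOp L) :
    ∃ (n : ℕ) (b : Fin n → (F.carrier →L[ℝ] ℝ)) (x : Fin n → E.carrier),
      L = ∑ i, (b i).smulRight (x i) := by
  haveI : FiniteDimensional ℝ (LinearMap.range (L : F.carrier →ₗ[ℝ] E.carrier)) := hL
  set W := LinearMap.range (L : F.carrier →ₗ[ℝ] E.carrier) with hW
  set B := Module.finBasis ℝ W with hB
  set Lc : F.carrier →L[ℝ] W := L.codRestrict W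
    (fun z => show (L : F.carrier →ₗ[ℝ] E.carrier) z ∈ W from LinearMap.mem_range_self _ _)
    with hLc
  refine ⟨Module.finrank ℝ W,
    fun i => (LinearMap.toContinuousLinearMap (B.coord i)).comp Lc,
    fun i => (B i : E.carrier), ?_⟩
  ext z
  have : ∑ i, (B.repr (Lc z)) i • (B i : E.carrier) =
      ((∑ i, (B.repr (Lc z)) i • B i : W) : E.carrier) := by
    rw [Submodule.coe_sum]; simp
  simp only [ContinuousLinearMap.sum_apply, ContinuousLinearMap.smulRight_apply,
    ContinuousLinearMap.comp_apply, LinearMap.coe_toContinuousLinearMap', Module.Basis.coord_apply]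
  rw [this, B.sum_repr (Lc z)]
  rfl

lemma comp_sum_rankOne {E F G : BanachSpc.{u}} {n : ℕ} (b : Fin n → (E.carrier →L[ℝ] ℝ))
    (x : Fin n → F.carrier) (T : F.carrier →L[ℝ] G.carrier) :
    T.comp (∑ i, (b i).smulRight (x i)) = ∑ i, (b i).smulRight (T (x i)) := by
  ext z; simp [ContinuousLinearMap.sum_apply]

lemma sum_rankOne_comp {E F G : BanachSpc.{u}} {n : ℕ} (b : Fin n → (F.carrier →L[ℝ] ℝ))
    (x : Fin n → G.carrier) (S : E.carrier →L[ℝ] F.carrier) :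
    (∑ i, (b i).smulRight (x i)).comp S = ∑ i, ((b i).comp S).smulRight (x i) := by
  ext z; simp [ContinuousLinearMap.sum_apply]

lemma fTrace_comp {E F : BanachSpc.{u}} {n : ℕ} (b : Fin n → (F.carrier →L[ℝ] ℝ))
    (x : Fin n → E.carrier) (T : E.carrier →L[ℝ] F.carrier) :
    fTrace (T.comp (∑ i, (b i).smulRight (x i))) = ∑ i, b i (T (x i)) := by
  rw [comp_sum_rankOne, fTrace_sum_rankOne]

section ConjHelpers

variable {pp : ℝ} {A : OperatorIdeal.{u}}

lemma conj_nrm_nonneg {E F : BanachSpc.{u}} (T : E.carrier →L[ℝ] F.carrier) :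
    0 ≤ A.conj.nrm E F T :=
  Real.sInf_nonneg fun _ hc => hc.1

lemma conj_nrm_le {E F : BanachSpc.{u}} {T : E.carrier →L[ℝ] F.carrier} {c : ℝ} (hc0 : 0 ≤ c)
    (h : ∀ L : F.carrier →L[ℝ] E.carrier, FinRankOp L →
      |fTrace (T.comp L)| ≤ c * A.nrm F E L) :
    A.conj.nrm E F T ≤ c :=
  csInf_le ⟨0, fun _ hd => hd.1⟩ ⟨hc0, h⟩

lemma conj_bound (hA : IsPBanachIdeal pp A) {E F : BanachSpc.{u}}
    {T : E.carrier →L[ℝ] F.carrier} (h : A.conj.mem E F T)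
    {L : F.carrier →L[ℝ] E.carrier} (hL : FinRankOp L) :
    |fTrace (T.comp L)| ≤ A.conj.nrm E F T * A.nrm F E L := by
  obtain ⟨c₀, hc₀0, hc₀⟩ := h
  have ha : 0 ≤ A.nrm F E L := hA.nonneg F E L
  rcases eq_or_lt_of_le ha with ha0 | ha0
  · have := hc₀ L hL
    rw [← ha0] at this ⊢
    simpa using this
  · have h1 : |fTrace (T.comp L)| / A.nrm F E L ≤ A.conj.nrm E F T := by
      refine le_csInf ⟨c₀, hc₀0, hc₀⟩ ?_
      rintro c ⟨_, hc⟩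
      exact (div_le_iff₀ ha0).2 (hc L hL)
    calc |fTrace (T.comp L)| = |fTrace (T.comp L)| / A.nrm F E L * A.nrm F E L := by
          field_simp
      _ ≤ A.conj.nrm E F T * A.nrm F E L := mul_le_mul_of_nonneg_right h1 ha

lemma fTrace_add_comp {E F : BanachSpc.{u}} (S T : E.carrier →L[ℝ] F.carrier)
    {L : F.carrier →L[ℝ] E.carrier} (hL : FinRankOp L) :
    fTrace ((S + T).comp L) = fTrace (S.comp L) + fTrace (T.comp L) := by
  obtain ⟨n, b, x, rfl⟩ := exists_decomp L hL
  rw [fTrace_comp, fTrace_comp, fTrace_comp, ← Finset.sum_add_distrib]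
  simp

lemma fTrace_sub_comp {E F : BanachSpc.{u}} (S T : E.carrier →L[ℝ] F.carrier)
    {L : F.carrier →L[ℝ] E.carrier} (hL : FinRankOp L) :
    fTrace ((S - T).comp L) = fTrace (S.comp L) - fTrace (T.comp L) := by
  obtain ⟨n, b, x, rfl⟩ := exists_decomp L hL
  rw [fTrace_comp, fTrace_comp, fTrace_comp, ← Finset.sum_sub_distrib]
  simp

lemma fTrace_smul_comp {E F : BanachSpc.{u}} (c : ℝ) (T : E.carrier →L[ℝ] F.carrier)
    {L : F.carrier →L[ℝ] E.carrier} (hL : FinRankOp L) :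
    fTrace ((c • T).comp L) = c * fTrace (T.comp L) := by
  obtain ⟨n, b, x, rfl⟩ := exists_decomp L hL
  rw [fTrace_comp, fTrace_comp, Finset.mul_sum]
  simp [mul_comm]

lemma conjMem_add {E F : BanachSpc.{u}} {S T : E.carrier →L[ℝ] F.carrier}
    (hS : A.conj.mem E F S) (hT : A.conj.mem E F T) : A.conj.mem E F (S + T) := by
  obtain ⟨c, hc0, hc⟩ := hS
  obtain ⟨d, hd0, hd⟩ := hT
  refine ⟨c + d, by linarith, fun L hL => ?_⟩
  rw [fTrace_add_comp S T hL, add_mul]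
  exact le_trans (abs_add_le _ _) (add_le_add (hc L hL) (hd L hL))

lemma conjMem_sub {E F : BanachSpc.{u}} {S T : E.carrier →L[ℝ] F.carrier}
    (hS : A.conj.mem E F S) (hT : A.conj.mem E F T) : A.conj.mem E F (S - T) := by
  obtain ⟨c, hc0, hc⟩ := hS
  obtain ⟨d, hd0, hd⟩ := hT
  refine ⟨c + d, by linarith, fun L hL => ?_⟩
  rw [fTrace_sub_comp S T hL, add_mul]
  exact le_trans (abs_sub _ _) (add_le_add (hc L hL) (hd L hL))

end ConjHelpers

open Pointwise

section MainHelpers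

variable {pp : ℝ} {A : OperatorIdeal.{u}}

lemma finRankOp_rankOne {E F : BanachSpc.{u}} (b : E.carrier →L[ℝ] ℝ) (x : F.carrier) :
    FinRankOp (b.smulRight x) := by
  have h := finRankOp_sum_rankOne (fun _ : Fin 1 => b) (fun _ : Fin 1 => x)
  simpa using h

lemma fTrace_comp_rankOne {E F : BanachSpc.{u}} (b : F.carrier →L[ℝ] ℝ) (x : E.carrier)
    (T : E.carrier →L[ℝ] F.carrier) : fTrace (T.comp (b.smulRight x)) = b (T x) := by
  have h := fTrace_comp (fun _ : Fin 1 => b) (fun _ : Fin 1 => x) T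
  simpa using h

lemma conj_opnorm_le (hA : IsPBanachIdeal pp A) {E F : BanachSpc.{u}}
    {T : E.carrier →L[ℝ] F.carrier} (hT : A.conj.mem E F T) :
    ‖T‖ ≤ A.conj.nrm E F T := by
  refine T.opNorm_le_bound (conj_nrm_nonneg T) fun x => ?_
  refine NormedSpace.norm_le_dual_bound ℝ (T x) (mul_nonneg (conj_nrm_nonneg T) (norm_nonneg x))
    fun f => ?_
  have hL : FinRankOp (f.smulRight x) := finRankOp_rankOne f x
  have h1 := conj_bound hA hT hL
  rw [fTrace_comp_rankOne] at h1
  have h2 : A.nrm F E (f.smulRight x) ≤ ‖f‖ * ‖x‖ := hA.rank_one_le F E f x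
  calc ‖f (T x)‖ = |f (T x)| := Real.norm_eq_abs _
    _ ≤ A.conj.nrm E F T * A.nrm F E (f.smulRight x) := h1
    _ ≤ A.conj.nrm E F T * (‖f‖ * ‖x‖) :=
        mul_le_mul_of_nonneg_left h2 (conj_nrm_nonneg T)
    _ = A.conj.nrm E F T * ‖x‖ * ‖f‖ := by ring

lemma conj_key_comp (hA : IsPBanachIdeal pp A) {E F G H : BanachSpc.{u}}
    (R : E.carrier →L[ℝ] F.carrier) (T : F.carrier →L[ℝ] G.carrier)
    (S : G.carrier →L[ℝ] H.carrier) {c : ℝ} (hc0 : 0 ≤ c)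
    (hc : ∀ M : G.carrier →L[ℝ] F.carrier, FinRankOp M →
      |fTrace (T.comp M)| ≤ c * A.nrm G F M)
    (L : H.carrier →L[ℝ] E.carrier) (hL : FinRankOp L) :
    |fTrace ((S.comp (T.comp R)).comp L)| ≤ (c * (‖S‖ * ‖R‖)) * A.nrm H E L := by
  obtain ⟨n, b, x, rfl⟩ := exists_decomp L hL
  have hMd : R.comp ((∑ i, (b i).smulRight (x i)).comp S) =
      ∑ i, ((b i).comp S).smulRight (R (x i)) := by
    rw [sum_rankOne_comp, comp_sum_rankOne]
  have hMfin : FinRankOp (R.comp ((∑ i, (b i).smulRight (x i)).comp S)) := by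
    rw [hMd]; exact finRankOp_sum_rankOne _ _
  have htr : fTrace ((S.comp (T.comp R)).comp (∑ i, (b i).smulRight (x i))) =
      fTrace (T.comp (R.comp ((∑ i, (b i).smulRight (x i)).comp S))) := by
    rw [fTrace_comp, hMd, fTrace_comp]
    rfl
  rw [htr]
  have h1 := hc _ hMfin
  have h2 : A.nrm G F (R.comp ((∑ i, (b i).smulRight (x i)).comp S)) ≤
      ‖R‖ * A.nrm H E (∑ i, (b i).smulRight (x i)) * ‖S‖ :=
    hA.comp_le G H E F S (∑ i, (b i).smulRight (x i)) R
      (hA.finrank_mem _ _ _ (finRankOp_sum_rankOne _ _))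
  calc |fTrace (T.comp (R.comp ((∑ i, (b i).smulRight (x i)).comp S)))|
      ≤ c * A.nrm G F (R.comp ((∑ i, (b i).smulRight (x i)).comp S)) := h1
    _ ≤ c * (‖R‖ * A.nrm H E (∑ i, (b i).smulRight (x i)) * ‖S‖) :=
        mul_le_mul_of_nonneg_left h2 hc0
    _ = (c * (‖S‖ * ‖R‖)) * A.nrm H E (∑ i, (b i).smulRight (x i)) := by ring

end MainHelpers

/-- The conjugate ideal `(A^Δ, 𝐀^Δ)` of any `p`-Banach ideal is a Banach
(i.e. `1`-Banach) operator ideal. -/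
theorem conj_is_Banach (p : ℝ) (A : OperatorIdeal.{u}) (hA : IsPBanachIdeal p A) :
    IsPBanachIdeal 1 A.conj := by
  have hAop : ∀ (E F : BanachSpc.{u}) (L : E.carrier →L[ℝ] F.carrier), FinRankOp L →
      ‖L‖ ≤ A.nrm E F L := fun E F L hL => hA.opnorm_le E F L (hA.finrank_mem E F L hL)
  refine ⟨one_pos, le_refl 1, ?_, fun E F T => conj_nrm_nonneg T,
    fun E F T hT => conj_opnorm_le hA hT, ?_, ?_, ?_, ?_, ?_, ?_, ?_, ?_⟩
  · -- finrank_mem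
    intro E F T hT
    obtain ⟨m, a, y, rfl⟩ := exists_decomp T hT
    refine ⟨∑ i, ‖a i‖ * ‖y i‖,
      Finset.sum_nonneg fun i _ => mul_nonneg (norm_nonneg _) (norm_nonneg _),
      fun L hL => ?_⟩
    rw [sum_rankOne_comp, fTrace_sum_rankOne]
    calc |∑ i, ((a i).comp L) (y i)| ≤ ∑ i, |((a i).comp L) (y i)| :=
          Finset.abs_sum_le_sum_abs _ _
      _ ≤ ∑ i, (‖a i‖ * ‖y i‖) * A.nrm F E L := by
          refine Finset.sum_le_sum fun i _ => ?_
          have h2 : ‖L‖ ≤ A.nrm F E L := hAop F E L hL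
          have h3 := mul_le_mul_of_nonneg_left
            (mul_le_mul_of_nonneg_right h2 (norm_nonneg (y i))) (norm_nonneg (a i))
          calc |((a i).comp L) (y i)| = |(a i) (L (y i))| := rfl
            _ ≤ ‖a i‖ * ‖L (y i)‖ := (a i).le_opNorm _
            _ ≤ ‖a i‖ * (‖L‖ * ‖y i‖) :=
                mul_le_mul_of_nonneg_left (L.le_opNorm _) (norm_nonneg _)
            _ ≤ ‖a i‖ * (A.nrm F E L * ‖y i‖) := h3
            _ = (‖a i‖ * ‖y i‖) * A.nrm F E L := by ring
      _ = (∑ i, ‖a i‖ * ‖y i‖) * A.nrm F E L := by rw [Finset.sum_mul]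
  · -- rank_one_le
    intro E F a y
    refine conj_nrm_le (mul_nonneg (norm_nonneg _) (norm_nonneg _)) fun L hL => ?_
    have hcomp : (a.smulRight y).comp L = (a.comp L).smulRight y := by ext z; simp
    have htr : fTrace ((a.smulRight y).comp L) = a (L y) := by
      rw [hcomp]
      have h := fTrace_comp_rankOne (a.comp L) y (ContinuousLinearMap.id ℝ F.carrier)
      simpa using h
    rw [htr]
    calc |a (L y)| ≤ ‖a‖ * ‖L y‖ := a.le_opNorm _
      _ ≤ ‖a‖ * (‖L‖ * ‖y‖) := mul_le_mul_of_nonneg_left (L.le_opNorm _) (norm_nonneg _)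
      _ ≤ ‖a‖ * (A.nrm F E L * ‖y‖) := mul_le_mul_of_nonneg_left
          (mul_le_mul_of_nonneg_right (hAop F E L hL) (norm_nonneg _)) (norm_nonneg _)
      _ = ‖a‖ * ‖y‖ * A.nrm F E L := by ring
  · -- smul_mem
    intro E F c T hT
    obtain ⟨d, hd0, hd⟩ := hT
    refine ⟨|c| * d, mul_nonneg (abs_nonneg _) hd0, fun L hL => ?_⟩
    rw [fTrace_smul_comp c T hL, abs_mul, mul_assoc]
    exact mul_le_mul_of_nonneg_left (hd L hL) (abs_nonneg _)
  · -- nrm_smul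
    intro E F c T _hT
    rcases eq_or_ne c 0 with rfl | hc
    · have hzero : ∀ L : F.carrier →L[ℝ] E.carrier, FinRankOp L →
          fTrace (((0:ℝ) • T).comp L) = 0 := by
        intro L hL; rw [fTrace_smul_comp 0 T hL, zero_mul]
      have hset : { d : ℝ | 0 ≤ d ∧ ∀ L : F.carrier →L[ℝ] E.carrier, FinRankOp L →
          |fTrace (((0:ℝ) • T).comp L)| ≤ d * A.nrm F E L } = Set.Ici 0 := by
        ext d
        simp only [Set.mem_setOf_eq, Set.mem_Ici]
        constructor
        · exact fun h => h.1
        · intro hd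
          exact ⟨hd, fun L hL => by
            rw [hzero L hL, abs_zero]
            exact mul_nonneg hd (hA.nonneg F E L)⟩
      show sInf _ = _
      rw [hset, csInf_Ici, abs_zero, zero_mul]
    · have hc' : (0:ℝ) < |c| := abs_pos.2 hc
      have hset : { d : ℝ | 0 ≤ d ∧ ∀ L : F.carrier →L[ℝ] E.carrier, FinRankOp L →
          |fTrace ((c • T).comp L)| ≤ d * A.nrm F E L } =
          |c| • { d : ℝ | 0 ≤ d ∧ ∀ L : F.carrier →L[ℝ] E.carrier, FinRankOp L →
          |fTrace (T.comp L)| ≤ d * A.nrm F E L } := by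
        ext d
        simp only [Set.mem_smul_set, Set.mem_setOf_eq]
        constructor
        · rintro ⟨hd0, hd⟩
          refine ⟨d / |c|, ⟨div_nonneg hd0 (le_of_lt hc'), fun L hL => ?_⟩, by
            rw [smul_eq_mul]; field_simp [hc'.ne']⟩
          have h := hd L hL
          rw [fTrace_smul_comp c T hL, abs_mul] at h
          rw [div_mul_eq_mul_div, le_div_iff₀ hc']
          nlinarith [abs_nonneg (fTrace (T.comp L))]
        · rintro ⟨e, ⟨he0, he⟩, rfl⟩
          refine ⟨mul_nonneg (le_of_lt hc') he0, fun L hL => ?_⟩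
          rw [fTrace_smul_comp c T hL, abs_mul, smul_eq_mul, mul_assoc]
          exact mul_le_mul_of_nonneg_left (he L hL) (abs_nonneg _)
      show sInf _ = _
      rw [hset, Real.sInf_smul_of_nonneg (abs_nonneg c), smul_eq_mul]
      rfl
  · -- add_mem
    exact fun E F S T hS hT => conjMem_add hS hT
  · -- p_triangle
    intro E F S T hS hT
    simp only [Real.rpow_one]
    refine conj_nrm_le (add_nonneg (conj_nrm_nonneg S) (conj_nrm_nonneg T)) fun L hL => ?_
    rw [fTrace_add_comp S T hL, add_mul]
    exact le_trans (abs_add_le _ _) (add_le_add (conj_bound hA hS hL) (conj_bound hA hT hL))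
  · -- comp_mem
    intro E F G H R T S hT
    obtain ⟨c, hc0, hc⟩ := hT
    exact ⟨c * (‖S‖ * ‖R‖), mul_nonneg hc0 (mul_nonneg (norm_nonneg _) (norm_nonneg _)),
      fun L hL => conj_key_comp hA R T S hc0 hc L hL⟩
  · -- comp_le
    intro E F G H R T S hT
    have key := conj_nrm_le (c := A.conj.nrm F G T * (‖S‖ * ‖R‖))
      (mul_nonneg (conj_nrm_nonneg T) (mul_nonneg (norm_nonneg _) (norm_nonneg _)))
      (fun L hL => conj_key_comp hA R T S (conj_nrm_nonneg T)
        (fun M hM => conj_bound hA hT hM) L hL)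
    calc A.conj.nrm E H (S.comp (T.comp R)) ≤ A.conj.nrm F G T * (‖S‖ * ‖R‖) := key
      _ = ‖S‖ * A.conj.nrm F G T * ‖R‖ := by ring
  · -- complete
    intro E F f hmem hC
    have hmemsub : ∀ m n, A.conj.mem E F (f m - f n) := fun m n =>
      conjMem_sub (hmem m) (hmem n)
    have hcauchy : CauchySeq f := by
      rw [Metric.cauchySeq_iff]
      intro ε hε
      obtain ⟨N, hN⟩ := hC ε hε
      refine ⟨N, fun m hm n hn => ?_⟩
      have h1 := hN m hm n hn
      rw [Real.rpow_one] at h1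
      rw [dist_eq_norm]
      exact lt_of_le_of_lt (conj_opnorm_le hA (hmemsub m n)) h1
    obtain ⟨T, hT⟩ := cauchySeq_tendsto_of_complete hcauchy
    have hnorm0 : Filter.Tendsto (fun m => ‖f m - T‖) Filter.atTop (nhds 0) :=
      tendsto_iff_norm_sub_tendsto_zero.1 hT
    have key : ∀ ε > (0:ℝ), ∃ N, ∀ n ≥ N,
        ∀ L : F.carrier →L[ℝ] E.carrier, FinRankOp L →
          |fTrace ((f n - T).comp L)| ≤ ε * A.nrm F E L := by
      intro ε hε
      obtain ⟨N, hN⟩ := hC ε hε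
      refine ⟨N, fun n hn L hL => ?_⟩
      have hLfin := hL
      obtain ⟨k, b, x, rfl⟩ := exists_decomp L hL
      set C : ℝ := ∑ i, ‖b i‖ * ‖x i‖ with hCdef
      have hC0 : (0:ℝ) ≤ C :=
        Finset.sum_nonneg fun i _ => mul_nonneg (norm_nonneg _) (norm_nonneg _)
      refine le_of_forall_pos_le_add fun δ hδ => ?_
      have hev : ∀ᶠ m in Filter.atTop, ‖f m - T‖ < δ / (C + 1) :=
        hnorm0.eventually (gt_mem_nhds (by positivity))
      obtain ⟨m, hm1, hm2⟩ := (hev.and (Filter.eventually_ge_atTop N)).exists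
      have hsplit : fTrace ((f n - T).comp (∑ i, (b i).smulRight (x i))) =
          fTrace ((f n - f m).comp (∑ i, (b i).smulRight (x i))) +
          fTrace ((f m - T).comp (∑ i, (b i).smulRight (x i))) := by
        rw [fTrace_comp, fTrace_comp, fTrace_comp, ← Finset.sum_add_distrib]
        refine Finset.sum_congr rfl fun i _ => ?_
        simp only [ContinuousLinearMap.sub_apply]
        rw [← map_add]
        congr 1
        abel
      have h1 : |fTrace ((f n - f m).comp (∑ i, (b i).smulRight (x i)))| ≤
          ε * A.nrm F E (∑ i, (b i).smulRight (x i)) := by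
        have hb := conj_bound hA (hmemsub n m) hLfin
        have hnm := hN n hn m hm2
        rw [Real.rpow_one] at hnm
        exact le_trans hb (mul_le_mul_of_nonneg_right (le_of_lt hnm) (hA.nonneg F E _))
      have h2 : |fTrace ((f m - T).comp (∑ i, (b i).smulRight (x i)))| ≤ C * ‖f m - T‖ := by
        rw [fTrace_comp]
        calc |∑ i, b i ((f m - T) (x i))| ≤ ∑ i, |b i ((f m - T) (x i))| :=
              Finset.abs_sum_le_sum_abs _ _
          _ ≤ ∑ i, (‖b i‖ * ‖x i‖) * ‖f m - T‖ := by
              refine Finset.sum_le_sum fun i _ => ?_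
              calc |b i ((f m - T) (x i))| ≤ ‖b i‖ * ‖(f m - T) (x i)‖ := (b i).le_opNorm _
                _ ≤ ‖b i‖ * (‖f m - T‖ * ‖x i‖) :=
                    mul_le_mul_of_nonneg_left ((f m - T).le_opNorm _) (norm_nonneg _)
                _ = (‖b i‖ * ‖x i‖) * ‖f m - T‖ := by ring
          _ = C * ‖f m - T‖ := by rw [← Finset.sum_mul]
      have h3 : C * ‖f m - T‖ ≤ δ := by
        have hstep : C * (δ / (C + 1)) ≤ δ := by
          rw [mul_comm, div_mul_eq_mul_div, div_le_iff₀ (by positivity : (0:ℝ) < C + 1)]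
          nlinarith
        exact le_trans (mul_le_mul_of_nonneg_left hm1.le hC0) hstep
      calc |fTrace ((f n - T).comp (∑ i, (b i).smulRight (x i)))| ≤
            |fTrace ((f n - f m).comp (∑ i, (b i).smulRight (x i)))| +
            |fTrace ((f m - T).comp (∑ i, (b i).smulRight (x i)))| := by
              rw [hsplit]; exact abs_add_le _ _
        _ ≤ ε * A.nrm F E (∑ i, (b i).smulRight (x i)) + δ :=
            add_le_add h1 (le_trans h2 h3)
    refine ⟨T, ?_, ?_⟩
    · obtain ⟨N1, hN1⟩ := key 1 one_pos
      have hm : A.conj.mem E F (f N1 - T) := ⟨1, zero_le_one, hN1 N1 le_rfl⟩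
      have hTeq : T = f N1 - (f N1 - T) := by abel
      rw [hTeq]
      exact conjMem_sub (hmem N1) hm
    · intro ε hε
      obtain ⟨N, hN⟩ := key (ε/2) (by linarith)
      refine ⟨N, fun n hn => ?_⟩
      rw [Real.rpow_one]
      have hle := conj_nrm_le (A := A) (T := f n - T)
        (by linarith : (0:ℝ) ≤ ε/2) (hN n hn)
      linarith
end
end

section
/- For every p-Banach operator ideal (A, **A**) (0 < p ≤ 1) and every finite rank operator T between Banach spaces, one has T ∈ A^{ΔΔ} and **A**^{ΔΔ}(T) ≤ **A**(T), i.e., A ⊆ A^{ΔΔ} isometrically on the class of finite rank operators. -/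
noncomputable section

open scoped Classical

universe u

section TraceAux

open LinearMap

variable {X Y : Type u} [AddCommGroup X] [Module ℝ X] [AddCommGroup Y] [Module ℝ Y]

/-- Linear-map level finite-rank trace. -/
noncomputable def lTr (f : X →ₗ[ℝ] X) : ℝ :=
  LinearMap.trace ℝ (LinearMap.range f)
    (f.restrict (p := LinearMap.range f) (q := LinearMap.range f)
      (fun x _ => LinearMap.mem_range_self _ x))

theorem fTrace_eq_lTr {E : BanachSpc.{u}} (T : E.carrier →L[ℝ] E.carrier) :
    fTrace T = lTr (T : E.carrier →ₗ[ℝ] E.carrier) := rfl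

/-- The trace can be computed on any finite-dimensional invariant subspace
containing the range. -/
theorem lTr_eq_trace_restrict (f : X →ₗ[ℝ] X) (W : Submodule ℝ X) [FiniteDimensional ℝ W]
    (hW : LinearMap.range f ≤ W) :
    lTr f = LinearMap.trace ℝ W
      (f.restrict (fun x _ => hW (LinearMap.mem_range_self f x))) := by
  haveI : FiniteDimensional ℝ (LinearMap.range f) := Submodule.finiteDimensional_of_le hW
  set R := LinearMap.range f with hR
  let j : R →ₗ[ℝ] W := Submodule.inclusion hW
  let r : W →ₗ[ℝ] R :=
    LinearMap.codRestrict R (f ∘ₗ W.subtype) (fun x => LinearMap.mem_range_self f (x : X))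
  have h1 : f.restrict (p := W) (q := W) (fun x _ => hW (LinearMap.mem_range_self f x))
      = j ∘ₗ r := by
    apply LinearMap.ext; intro x; apply Subtype.ext; rfl
  have h2 : r ∘ₗ j =
      f.restrict (p := R) (q := R) (fun x _ => LinearMap.mem_range_self _ x) := by
    apply LinearMap.ext; intro x; apply Subtype.ext; rfl
  calc lTr f = LinearMap.trace ℝ R
        (f.restrict (p := R) (q := R) (fun x _ => LinearMap.mem_range_self _ x)) := rfl
    _ = LinearMap.trace ℝ R (r ∘ₗ j) := by rw [h2]
    _ = LinearMap.trace ℝ W (j ∘ₗ r) := (LinearMap.trace_comp_comm' r j).symm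
    _ = LinearMap.trace ℝ W
        (f.restrict (p := W) (q := W) (fun x _ => hW (LinearMap.mem_range_self f x))) := by
      rw [h1]

/-- Trace of a composition through a finite-dimensional space. -/
theorem lTr_comp {V : Type u} [AddCommGroup V] [Module ℝ V] [FiniteDimensional ℝ V]
    (u : V →ₗ[ℝ] X) (w : X →ₗ[ℝ] V) :
    lTr (u ∘ₗ w) = LinearMap.trace ℝ V (w ∘ₗ u) := by
  haveI : FiniteDimensional ℝ (LinearMap.range u) := u.finiteDimensional_range
  have hle : LinearMap.range (u ∘ₗ w) ≤ LinearMap.range u := by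
    rintro _ ⟨x, rfl⟩; exact LinearMap.mem_range_self u (w x)
  rw [lTr_eq_trace_restrict (u ∘ₗ w) (LinearMap.range u) hle]
  let u₀ : V →ₗ[ℝ] LinearMap.range u :=
    LinearMap.codRestrict (LinearMap.range u) u (fun x => LinearMap.mem_range_self u x)
  have h1 : (u ∘ₗ w).restrict
        (fun x _ => hle (LinearMap.mem_range_self (u ∘ₗ w) x)) =
      u₀ ∘ₗ (w ∘ₗ (LinearMap.range u).subtype) := by
    apply LinearMap.ext; intro x; apply Subtype.ext; rfl
  rw [h1, LinearMap.trace_comp_comm' (w ∘ₗ (LinearMap.range u).subtype) u₀]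
  rw [LinearMap.comp_assoc, LinearMap.subtype_comp_codRestrict]

/-- Commutativity of the finite-rank trace. -/
theorem lTr_comm (f : X →ₗ[ℝ] Y) (g : Y →ₗ[ℝ] X)
    [FiniteDimensional ℝ (LinearMap.range g)] :
    lTr (f ∘ₗ g) = lTr (g ∘ₗ f) := by
  set V := LinearMap.range g with hV
  let g₀ : Y →ₗ[ℝ] V := LinearMap.codRestrict V g (fun x => LinearMap.mem_range_self g x)
  have h1 : f ∘ₗ g = (f ∘ₗ V.subtype) ∘ₗ g₀ := by
    apply LinearMap.ext; intro x; rfl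
  have h2 : g ∘ₗ f = V.subtype ∘ₗ (g₀ ∘ₗ f) := by
    apply LinearMap.ext; intro x; rfl
  rw [h1, h2, lTr_comp (f ∘ₗ V.subtype) g₀, lTr_comp V.subtype (g₀ ∘ₗ f)]
  simp only [LinearMap.comp_assoc]

end TraceAux

/-- For a fixed finite-rank operator `L`, the trace pairing `M ↦ tr (L ∘ M)` is bounded
by a constant times the operator norm of `M`. -/
theorem exists_trace_bound {E F : BanachSpc.{u}} (L : F.carrier →L[ℝ] E.carrier)
    (hL : FinRankOp L) :
    ∃ c : ℝ, 0 ≤ c ∧ ∀ M : E.carrier →L[ℝ] F.carrier,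
      |fTrace (L.comp M)| ≤ c * ‖M‖ := by
  haveI : FiniteDimensional ℝ
      (LinearMap.range (L : F.carrier →ₗ[ℝ] E.carrier)) := hL
  set V := LinearMap.range (L : F.carrier →ₗ[ℝ] E.carrier) with hVdef
  let L₀ : F.carrier →L[ℝ] V :=
    L.codRestrict V (fun x => LinearMap.mem_range_self _ x)
  let b := Module.finBasis ℝ V
  let φ : Fin (Module.finrank ℝ V) → (V →L[ℝ] ℝ) :=
    fun i => LinearMap.toContinuousLinearMap (b.coord i)
  refine ⟨∑ i, ‖φ i‖ * (‖L₀‖ * ‖b i‖), Finset.sum_nonneg (fun i _ => by positivity), ?_⟩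
  intro M
  have hcomm : fTrace (L.comp M) =
      LinearMap.trace ℝ V ((L₀ : F.carrier →ₗ[ℝ] V) ∘ₗ
        ((M : E.carrier →ₗ[ℝ] F.carrier) ∘ₗ V.subtype)) := by
    rw [fTrace_eq_lTr]
    have h1 : ((L.comp M : E.carrier →L[ℝ] E.carrier) : E.carrier →ₗ[ℝ] E.carrier) =
        V.subtype ∘ₗ ((L₀ : F.carrier →ₗ[ℝ] V) ∘ₗ (M : E.carrier →ₗ[ℝ] F.carrier)) := by
      apply LinearMap.ext; intro x; rfl
    rw [h1, lTr_comp V.subtype ((L₀ : F.carrier →ₗ[ℝ] V) ∘ₗ (M : E.carrier →ₗ[ℝ] F.carrier))]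
    simp only [LinearMap.comp_assoc]
  rw [hcomm, LinearMap.trace_eq_matrix_trace ℝ b, Matrix.trace]
  rw [Finset.sum_mul]
  refine le_trans (Finset.abs_sum_le_sum_abs _ _) (Finset.sum_le_sum ?_)
  intro i _
  have happ : (LinearMap.toMatrix b b ((L₀ : F.carrier →ₗ[ℝ] V) ∘ₗ
        ((M : E.carrier →ₗ[ℝ] F.carrier) ∘ₗ V.subtype))).diag i
      = φ i (L₀ (M (b i))) := by
    simp [Matrix.diag, LinearMap.toMatrix_apply, φ, Module.Basis.coord_apply,
      LinearMap.coe_toContinuousLinearMap']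
  rw [happ]
  have h1 : |φ i (L₀ (M (b i)))| ≤ ‖φ i‖ * ‖L₀ (M (b i))‖ := by
    simpa using (φ i).le_opNorm (L₀ (M (b i)))
  have h2 : ‖L₀ (M (b i))‖ ≤ ‖L₀‖ * (‖M‖ * ‖b i‖) := by
    refine le_trans (L₀.le_opNorm _) (mul_le_mul_of_nonneg_left ?_ (norm_nonneg _))
    exact M.le_opNorm ((b i : V) : E.carrier)
  calc |φ i (L₀ (M (b i)))| ≤ ‖φ i‖ * (‖L₀‖ * (‖M‖ * ‖b i‖)) :=
        le_trans h1 (mul_le_mul_of_nonneg_left h2 (ContinuousLinearMap.opNorm_nonneg _))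
    _ = ‖φ i‖ * (‖L₀‖ * ‖b i‖) * ‖M‖ := by ring

/-- `A ⊆ A^{ΔΔ}` isometrically (contractively) on finite rank operators. -/
theorem mem_biconj_of_finRank (p : ℝ) (A : OperatorIdeal.{u}) (hA : IsPBanachIdeal p A)
    (E F : BanachSpc.{u}) (T : E.carrier →L[ℝ] F.carrier) (hT : FinRankOp T) :
    (A.conj.conj).mem E F T ∧ (A.conj.conj).nrm E F T ≤ A.nrm E F T := by
  have hT0 : 0 ≤ A.nrm E F T := hA.nonneg E F T
  have key : ∀ L : F.carrier →L[ℝ] E.carrier, FinRankOp L →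
      |fTrace (T.comp L)| ≤ A.nrm E F T * A.conj.nrm F E L := by
    intro L hL
    haveI : FiniteDimensional ℝ
        (LinearMap.range (L : F.carrier →ₗ[ℝ] E.carrier)) := hL
    -- the defining set of the conjugate norm of L
    set S := { c : ℝ | 0 ≤ c ∧ ∀ M : E.carrier →L[ℝ] F.carrier, FinRankOp M →
      |fTrace (L.comp M)| ≤ c * A.nrm E F M } with hSdef
    have hSnrm : A.conj.nrm F E L = sInf S := rfl
    -- S is nonempty
    obtain ⟨c₀, hc₀0, hc₀⟩ := exists_trace_bound L hL
    have hc₀S : c₀ ∈ S := by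
      refine ⟨hc₀0, fun M hM => le_trans (hc₀ M) ?_⟩
      exact mul_le_mul_of_nonneg_left
        (hA.opnorm_le E F M (hA.finrank_mem E F M hM)) hc₀0
    have hSne : S.Nonempty := ⟨c₀, hc₀S⟩
    -- trace commutativity
    have hcomm : fTrace (T.comp L) = fTrace (L.comp T) := by
      rw [fTrace_eq_lTr, fTrace_eq_lTr]
      have h1 : ((T.comp L : F.carrier →L[ℝ] F.carrier) : F.carrier →ₗ[ℝ] F.carrier) =
          (T : E.carrier →ₗ[ℝ] F.carrier) ∘ₗ (L : F.carrier →ₗ[ℝ] E.carrier) := rfl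
      have h2 : ((L.comp T : E.carrier →L[ℝ] E.carrier) : E.carrier →ₗ[ℝ] E.carrier) =
          (L : F.carrier →ₗ[ℝ] E.carrier) ∘ₗ (T : E.carrier →ₗ[ℝ] F.carrier) := rfl
      rw [h1, h2]
      exact lTr_comm (T : E.carrier →ₗ[ℝ] F.carrier) (L : F.carrier →ₗ[ℝ] E.carrier)
    have hbound : ∀ c ∈ S, |fTrace (T.comp L)| ≤ c * A.nrm E F T := by
      intro c hc
      rw [hcomm]
      exact hc.2 T hT
    rw [hSnrm]
    rcases eq_or_lt_of_le hT0 with ha | ha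
    · have h0 : |fTrace (T.comp L)| ≤ 0 := by
        have := hbound c₀ hc₀S
        rw [← ha] at this
        simpa using this
      calc |fTrace (T.comp L)| ≤ 0 := h0
        _ = A.nrm E F T * sInf S := by rw [← ha]; ring
    · have hle : |fTrace (T.comp L)| / A.nrm E F T ≤ sInf S := by
        refine le_csInf hSne (fun c hc => ?_)
        rw [div_le_iff₀ ha]
        exact hbound c hc
      rw [div_le_iff₀ ha] at hle
      calc |fTrace (T.comp L)| ≤ sInf S * A.nrm E F T := hle
        _ = A.nrm E F T * sInf S := mul_comm _ _
  constructor
  · exact ⟨A.nrm E F T, hT0, key⟩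
  · have hmem : A.nrm E F T ∈ { c : ℝ | 0 ≤ c ∧
        ∀ L : F.carrier →L[ℝ] E.carrier, FinRankOp L →
          |fTrace (T.comp L)| ≤ c * A.conj.nrm F E L } := ⟨hT0, key⟩
    exact csInf_le ⟨0, fun x hx => hx.1⟩ hmem
end
end
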